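/- arXiv:2603.15830 — 8 statements merged into one kernel-verified Lean document; each statement's English description precedes it below -/
import Mathlib

section
/- For integers 0 ≤ k ≤ n with n ≥ 1, the number of binary necklaces of length n with exactly k ones equals (1/n) · Σ_{d | gcd(n,k)} φ(d) · C(n/d, k/d), where the sum is over positive divisors d of gcd(n,k) and φ is Euler's totient function. -/
open Finset

/-- Number of ones in a cyclic binary word of length `n`. -/
noncomputable def onesCount (n : ℕ) (w : ZMod n → Bool) : ℕ :=
  Nat.card {i : ZMod n // w i = true}

/-- The co-period of a cyclic binary word `w` of length `n`: the size of its
stabilizer under cyclic rotation (equivalently, the `j` such that `w = v^j`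
with `v` primitive). -/
noncomputable def coPeriod (n : ℕ) (w : ZMod n → Bool) : ℕ :=
  Nat.card {t : ZMod n // ∀ i, w (i + t) = w i}

/-- Two cyclic words are related iff they are cyclic rotations of each other. -/
def rotRel (n : ℕ) (u v : ZMod n → Bool) : Prop :=
  ∃ t : ZMod n, ∀ i, u i = v (i + t)

theorem rotRel_equivalence (n : ℕ) : Equivalence (rotRel n) := by
  constructor
  · exact fun u => ⟨0, fun i => by rw [add_zero]⟩
  · rintro u v ⟨t, h⟩
    exact ⟨-t, fun i => by rw [h, neg_add_cancel_right]⟩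
  · rintro u v w ⟨t1, h1⟩ ⟨t2, h2⟩
    exact ⟨t1 + t2, fun i => by rw [h1, h2, ← add_assoc]⟩

def rotSetoid (n : ℕ) : Setoid (ZMod n → Bool) := ⟨rotRel n, rotRel_equivalence n⟩

/-- The number of binary necklaces of length `n` with `k` ones. -/
noncomputable def NCard (n k : ℕ) : ℕ :=
  Nat.card (Quotient (Setoid.comap
    (Subtype.val : {w : ZMod n → Bool // onesCount n w = k} → _) (rotSetoid n)))

/-- The number of binary necklaces of length `n` with `k` ones whose co-period divides `r`. -/
noncomputable def NrCard (n k r : ℕ) : ℕ :=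
  Nat.card (Quotient (Setoid.comap
    (Subtype.val : {w : ZMod n → Bool // onesCount n w = k ∧ coPeriod n w ∣ r} → _)
    (rotSetoid n)))

/-- The number of `k`-element subsets of `{1,…,n}` whose elements sum to `r` mod `n`. -/
def SbarCard (n k r : ℕ) : ℕ :=
  ((Finset.Icc 1 n).powerset.filter
    (fun A => A.card = k ∧ (∑ a ∈ A, a) % n = r)).card

/-- The number of `k`-element subsets of `{1,…,n-1}` whose elements sum to `r` mod `n`. -/
def SCard (n k r : ℕ) : ℕ :=
  ((Finset.Icc 1 (n - 1)).powerset.filter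
    (fun A => A.card = k ∧ (∑ a ∈ A, a) % n = r)).card

/-- The Ramanujan sum `c_d(r) = ∑_{j ∣ gcd(r,d)} j · μ(d/j)`. -/
def ramanujanSum (d : ℕ) (r : ℤ) : ℤ :=
  ∑ j ∈ (Int.gcd r d).divisors, (j : ℤ) * ArithmeticFunction.moebius (d / j)

section NecklaceAux

/-! ### Auxiliary lemmas for the necklace counting theorem -/

private lemma zsmul_fix' {n : ℕ} {w : ZMod n → Bool} {s : ZMod n} (h : ∀ i, w (i + s) = w i) :
    ∀ (z : ℤ) (i : ZMod n), w (i + z • s) = w i := by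
  intro z
  induction z using Int.induction_on with
  | zero => simp
  | succ z ih =>
      intro i
      rw [show i + ((z : ℤ) + 1) • s = (i + (z : ℤ) • s) + s by
        rw [add_smul, one_smul, add_assoc], h, ih]
  | pred z ih =>
      intro i
      have h2 : w (i + (-(z:ℤ) - 1) • s + s) = w (i + (-(z:ℤ) - 1) • s) := h _
      rw [add_assoc, ← one_smul ℤ s, smul_smul, mul_one, ← add_smul, sub_add_cancel] at h2
      rw [← h2, ih]

private lemma fix_iff_gcd' {n : ℕ} [NeZero n] {w : ZMod n → Bool} (t : ZMod n) :
    (∀ i, w (i + t) = w i) ↔ (∀ i, w (i + ((n.gcd t.val : ℕ) : ZMod n)) = w i) := by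
  constructor
  · intro h i
    have hg : ((n.gcd t.val : ℕ) : ZMod n) = (Nat.gcdB n t.val) • t := by
      have := Nat.gcd_eq_gcd_ab n t.val
      calc ((n.gcd t.val : ℕ) : ZMod n) = (((n.gcd t.val : ℕ) : ℤ) : ZMod n) := by push_cast; ring
        _ = ((n * Nat.gcdA n t.val + t.val * Nat.gcdB n t.val : ℤ) : ZMod n) := by rw [← this]
        _ = (Nat.gcdB n t.val) • t := by
            push_cast
            rw [ZMod.natCast_self, ZMod.natCast_val, ZMod.cast_id, zsmul_eq_mul]
            ring
    rw [hg]
    exact zsmul_fix' h _ i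
  · intro h i
    have ht : t = ((t.val / n.gcd t.val : ℕ) : ℤ) • ((n.gcd t.val : ℕ) : ZMod n) := by
      rw [natCast_zsmul, nsmul_eq_mul, ← Nat.cast_mul,
        Nat.div_mul_cancel (Nat.gcd_dvd_right n t.val), ZMod.natCast_val, ZMod.cast_id]
    rw [show i + t = i + ((t.val / n.gcd t.val : ℕ) : ℤ) • ((n.gcd t.val : ℕ) : ZMod n) by
      rw [← ht]]
    exact zsmul_fix' h _ i

private lemma onesCount_filter' (n : ℕ) [NeZero n] (w : ZMod n → Bool) :
    onesCount n w = #(univ.filter fun i => w i = true) := by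
  classical
  rw [onesCount, Nat.card_eq_fintype_card, Fintype.card_subtype]

private lemma castHom_surj' {n m : ℕ} [NeZero m] (hm : m ∣ n) :
    Function.Surjective (ZMod.castHom hm (ZMod m)) := by
  intro j
  obtain ⟨a, rfl⟩ := ZMod.natCast_zmod_surjective j
  exact ⟨(a : ZMod n), map_natCast _ a⟩

private lemma fiber_card' {n m : ℕ} [NeZero n] [NeZero m] (hm : m ∣ n) (j : ZMod m) :
    #(univ.filter fun i : ZMod n => ZMod.castHom hm (ZMod m) i = j) = n / m := by
  classical
  have key : ∀ j j' : ZMod m,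
      #(univ.filter fun i : ZMod n => ZMod.castHom hm (ZMod m) i = j)
      = #(univ.filter fun i : ZMod n => ZMod.castHom hm (ZMod m) i = j') := by
    intro j j'
    obtain ⟨a, ha⟩ := castHom_surj' hm j
    obtain ⟨a', ha'⟩ := castHom_surj' hm j'
    apply Finset.card_bij' (fun x _ => x + (a' - a)) (fun x _ => x - (a' - a))
    · intro x hx
      simp only [mem_filter, mem_univ, true_and] at hx ⊢
      rw [map_add, hx, map_sub, ha, ha']; ring
    · intro x hx
      simp only [mem_filter, mem_univ, true_and] at hx ⊢
      rw [map_sub, hx, map_sub, ha, ha']; ring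
    · intro x _; ring
    · intro x _; ring
  have total : ∑ j : ZMod m, #(univ.filter fun i : ZMod n => ZMod.castHom hm (ZMod m) i = j)
      = n := by
    rw [← Finset.card_eq_sum_card_fiberwise (fun x _ => mem_univ _)]
    simp [ZMod.card]
  rw [Finset.sum_congr rfl (fun j' _ => key j' j)] at total
  simp only [Finset.sum_const, card_univ, ZMod.card, smul_eq_mul] at total
  obtain ⟨d, rfl⟩ := hm
  rw [Nat.mul_div_cancel_left _ (Nat.pos_of_ne_zero (NeZero.ne m))]
  exact Nat.eq_of_mul_eq_mul_left (Nat.pos_of_ne_zero (NeZero.ne m)) total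

private lemma factor_through' {n m : ℕ} [NeZero n] [NeZero m] (hm : m ∣ n) {w : ZMod n → Bool}
    (h : ∀ i, w (i + ((m : ℕ) : ZMod n)) = w i) :
    ∃ v : ZMod m → Bool, ∀ i, v (ZMod.castHom hm (ZMod m) i) = w i := by
  refine ⟨fun j => w ((j.val : ℕ) : ZMod n), fun i => ?_⟩
  have hi : i = ((i.val : ℕ) : ZMod n) := (ZMod.natCast_rightInverse i).symm
  rw [hi, map_natCast]
  show w ((((i.val : ℕ) : ZMod m)).val : ZMod n) = w ((i.val : ℕ) : ZMod n)
  rw [ZMod.val_natCast]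
  conv_rhs => rw [show (i.val : ℕ) = i.val % m + i.val / m * m from
    (Nat.mod_add_div' i.val m).symm]
  push_cast
  rw [show ((i.val / m : ℕ) : ZMod n) * ((m : ℕ) : ZMod n)
      = ((i.val / m : ℕ) : ℤ) • ((m : ℕ) : ZMod n) by rw [zsmul_eq_mul, Int.cast_natCast]]
  rw [zsmul_fix' h]

private lemma onesCount_comp' {n m : ℕ} [NeZero n] [NeZero m] (hm : m ∣ n) (v : ZMod m → Bool) :
    onesCount n (fun i => v (ZMod.castHom hm (ZMod m) i)) = (n / m) * onesCount m v := by
  classical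
  rw [onesCount_filter', onesCount_filter']
  rw [Finset.card_eq_sum_card_fiberwise (f := ZMod.castHom hm (ZMod m))
    (s := univ.filter fun i => v (ZMod.castHom hm (ZMod m) i) = true)
    (t := univ.filter fun j => v j = true) (fun i hi => by
      exact Finset.mem_filter.mpr ⟨mem_univ _, (Finset.mem_filter.mp hi).2⟩)]
  have hfib : ∀ j ∈ univ.filter (fun j => v j = true),
      #((univ.filter fun i => v (ZMod.castHom hm (ZMod m) i) = true).filter
        fun i => ZMod.castHom hm (ZMod m) i = j) = n / m := by
    intro j hj
    simp only [mem_filter, mem_univ, true_and] at hj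
    rw [← fiber_card' hm j]
    congr 1
    ext i
    simp only [mem_filter, mem_univ, true_and, and_iff_right_iff_imp]
    intro hc; rw [hc, hj]
  rw [Finset.sum_congr rfl hfib, Finset.sum_const, smul_eq_mul, mul_comm]

private lemma card_ones_eq_choose' (m j : ℕ) [NeZero m] :
    Nat.card {v : ZMod m → Bool // onesCount m v = j} = m.choose j := by
  classical
  have e : {v : ZMod m → Bool // onesCount m v = j} ≃ {s : Finset (ZMod m) // s.card = j} :=
    { toFun := fun v => ⟨univ.filter (fun i => v.1 i = true), by rw [← onesCount_filter', v.2]⟩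
      invFun := fun s => ⟨fun i => decide (i ∈ s.1), by rw [onesCount_filter']; simp [s.2]⟩
      left_inv := fun v => Subtype.ext (funext fun i => by simp)
      right_inv := fun s => Subtype.ext (by ext i; simp) }
  rw [Nat.card_congr e, Nat.card_eq_fintype_card, Fintype.card_finset_len, ZMod.card]

private lemma card_periodic' (n k d : ℕ) [NeZero n] (hd : d ∣ n) :
    Nat.card {w : ZMod n → Bool //
        onesCount n w = k ∧ ∀ i, w (i + ((n / d : ℕ) : ZMod n)) = w i}
      = if d ∣ k then (n / d).choose (k / d) else 0 := by
  classical
  have hn0 : n ≠ 0 := NeZero.ne n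
  have hd0 : d ≠ 0 := by rintro rfl; exact hn0 (Nat.eq_zero_of_zero_dvd hd)
  set m := n / d with hm_def
  have hm : m ∣ n := Nat.div_dvd_of_dvd hd
  have hm0 : m ≠ 0 := by
    simp only [hm_def]
    exact Nat.ne_of_gt (Nat.div_pos (Nat.le_of_dvd (Nat.pos_of_ne_zero hn0) hd)
      (Nat.pos_of_ne_zero hd0))
  haveI : NeZero m := ⟨hm0⟩
  have hnm : n / m = d := by rw [hm_def, Nat.div_div_self hd hn0]
  set C := ZMod.castHom hm (ZMod m) with hC
  have key : Function.Bijective (fun v : {v : ZMod m → Bool // d * onesCount m v = k} =>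
      (⟨fun i => v.1 (C i), by
          rw [onesCount_comp' hm, hnm, v.2]
          refine ⟨rfl, fun i => ?_⟩
          have h0 : C ((m : ZMod n)) = 0 := by rw [hC, map_natCast, ZMod.natCast_self]
          show v.1 (C (i + (m : ZMod n))) = v.1 (C i)
          rw [map_add, h0, add_zero]⟩ :
        {w : ZMod n → Bool // onesCount n w = k ∧ ∀ i, w (i + ((m : ℕ) : ZMod n)) = w i})) := by
    constructor
    · intro v v' hvv
      have := congrArg Subtype.val hvv
      simp only at this
      refine Subtype.ext (funext fun j => ?_)
      obtain ⟨i, rfl⟩ := castHom_surj' hm j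
      exact congrFun this i
    · rintro ⟨w, hk, hper⟩
      obtain ⟨v, hv⟩ := factor_through' hm hper
      have hwv : (fun i => v (C i)) = w := funext hv
      refine ⟨⟨v, ?_⟩, Subtype.ext hwv⟩
      have := onesCount_comp' hm v
      rw [hnm, hwv, hk] at this
      exact this.symm
  rw [← Nat.card_eq_of_bijective _ key]
  by_cases hdk : d ∣ k
  · rw [if_pos hdk]
    have : {v : ZMod m → Bool // d * onesCount m v = k}
        ≃ {v : ZMod m → Bool // onesCount m v = k / d} :=
      Equiv.subtypeEquivRight (fun v => by
        constructor
        · intro h; rw [← h, Nat.mul_div_cancel_left _ (Nat.pos_of_ne_zero hd0)]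
        · intro h; rw [h, Nat.mul_div_cancel' hdk])
    rw [Nat.card_congr this, card_ones_eq_choose']
  · rw [if_neg hdk]
    have : IsEmpty {v : ZMod m → Bool // d * onesCount m v = k} :=
      ⟨fun v => hdk ⟨onesCount m v.1, v.2.symm⟩⟩
    exact Nat.card_of_isEmpty

private lemma onesCount_rot' {n : ℕ} (t : ZMod n) (w : ZMod n → Bool) :
    onesCount n (fun i => w (i + t)) = onesCount n w :=
  Nat.card_congr (Equiv.subtypeEquiv (Equiv.addRight t) fun _ => Iff.rfl)

instance necklaceAddAction (n k : ℕ) :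
    AddAction (ZMod n) {w : ZMod n → Bool // onesCount n w = k} where
  vadd t w := ⟨fun i => w.1 (i + t), by rw [onesCount_rot', w.2]⟩
  zero_vadd w := Subtype.ext (funext fun i => by show w.1 (i + 0) = w.1 i; rw [add_zero])
  add_vadd t s w := Subtype.ext (funext fun i => by
    show w.1 (i + (t + s)) = w.1 (i + t + s); rw [add_assoc])

private lemma setoid_eq' (n k : ℕ) :
    Setoid.comap (Subtype.val : {w : ZMod n → Bool // onesCount n w = k} → _) (rotSetoid n)
      = AddAction.orbitRel (ZMod n) {w : ZMod n → Bool // onesCount n w = k} := by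
  ext u v
  show rotRel n u.1 v.1 ↔ u ∈ AddAction.orbit (ZMod n) v
  constructor
  · rintro ⟨t, h⟩
    exact ⟨t, Subtype.ext (funext fun i => (h i).symm)⟩
  · rintro ⟨t, ht⟩
    exact ⟨t, fun i => (congrFun (congrArg Subtype.val ht) i).symm⟩

private lemma burnside' (n k : ℕ) [NeZero n] :
    NCard n k * n = ∑ t : ZMod n,
      Nat.card (AddAction.fixedBy {w : ZMod n → Bool // onesCount n w = k} t) := by
  classical
  haveI : Fintype {w : ZMod n → Bool // onesCount n w = k} := Fintype.ofFinite _
  haveI : ∀ t : ZMod n, Fintype (AddAction.fixedBy {w : ZMod n → Bool // onesCount n w = k} t) :=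
    fun t => Fintype.ofFinite _
  haveI : Fintype (Quotient (AddAction.orbitRel (ZMod n)
      {w : ZMod n → Bool // onesCount n w = k})) := Fintype.ofFinite _
  have hb := AddAction.sum_card_fixedBy_eq_card_orbits_mul_card_addGroup (ZMod n)
    {w : ZMod n → Bool // onesCount n w = k}
  rw [NCard]
  have hq : Nat.card (Quotient (Setoid.comap
      (Subtype.val : {w : ZMod n → Bool // onesCount n w = k} → _) (rotSetoid n)))
      = Nat.card (Quotient (AddAction.orbitRel (ZMod n)
        {w : ZMod n → Bool // onesCount n w = k})) := by rw [setoid_eq']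
  rw [hq]
  simp only [Nat.card_eq_fintype_card]
  rw [hb, ZMod.card]

private lemma addOrderOf_zmod_eq (n : ℕ) [NeZero n] (t : ZMod n) :
    addOrderOf t = n / n.gcd t.val := by
  conv_lhs => rw [show t = ((t.val : ℕ) : ZMod n) from (ZMod.natCast_rightInverse t).symm]
  rw [ZMod.addOrderOf_coe _ (NeZero.ne n)]

private lemma addOrderOf_zmod_dvd (n : ℕ) [NeZero n] (t : ZMod n) : addOrderOf t ∣ n := by
  have := addOrderOf_dvd_card (x := t); rwa [ZMod.card] at this

private lemma card_fixedBy' (n k : ℕ) [NeZero n] (t : ZMod n) :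
    Nat.card (AddAction.fixedBy {w : ZMod n → Bool // onesCount n w = k} t)
      = if addOrderOf t ∣ k then (n / addOrderOf t).choose (k / addOrderOf t) else 0 := by
  classical
  have hn0 : n ≠ 0 := NeZero.ne n
  set d := addOrderOf t with hd_def
  have hg : n / d = n.gcd t.val := by
    rw [hd_def, addOrderOf_zmod_eq, Nat.div_div_self (Nat.gcd_dvd_left n t.val) hn0]
  have e1 : (AddAction.fixedBy {w : ZMod n → Bool // onesCount n w = k} t)
      ≃ {w : {w : ZMod n → Bool // onesCount n w = k} // ∀ i, w.1 (i + t) = w.1 i} := by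
    refine Equiv.subtypeEquivRight fun w => ?_
    rw [AddAction.mem_fixedBy, Subtype.ext_iff,
      show (t +ᵥ w).1 = fun i => w.1 (i + t) from rfl, funext_iff]
  have e2 : {w : {w : ZMod n → Bool // onesCount n w = k} // ∀ i, w.1 (i + t) = w.1 i}
      ≃ {w : ZMod n → Bool // onesCount n w = k ∧ ∀ i, w (i + t) = w i} :=
    Equiv.subtypeSubtypeEquivSubtypeInter (fun w : ZMod n → Bool => onesCount n w = k)
      (fun w => ∀ i, w (i + t) = w i)
  have e3 : {w : ZMod n → Bool // onesCount n w = k ∧ ∀ i, w (i + t) = w i}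
      ≃ {w : ZMod n → Bool // onesCount n w = k ∧ ∀ i, w (i + ((n / d : ℕ) : ZMod n)) = w i} :=
    Equiv.subtypeEquivRight fun w => by rw [hg]; exact and_congr_right fun _ => fix_iff_gcd' t
  rw [Nat.card_congr (e1.trans (e2.trans e3)), card_periodic' n k d (addOrderOf_zmod_dvd n t)]

private lemma sum_over_group' (n k : ℕ) [NeZero n] :
    ∑ t : ZMod n, (if addOrderOf t ∣ k then (n / addOrderOf t).choose (k / addOrderOf t) else 0)
      = ∑ d ∈ n.divisors,
          Nat.totient d * (if d ∣ k then (n / d).choose (k / d) else 0) := by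
  classical
  rw [← Finset.sum_fiberwise_of_maps_to (g := addOrderOf) (t := n.divisors)
    (fun t _ => Nat.mem_divisors.mpr ⟨addOrderOf_zmod_dvd n t, NeZero.ne n⟩)]
  refine Finset.sum_congr rfl fun d hd => ?_
  have hcard : #(univ.filter fun t : ZMod n => addOrderOf t = d) = Nat.totient d := by
    have hdn : d ∣ Fintype.card (ZMod n) := by
      rw [ZMod.card]; exact (Nat.mem_divisors.mp hd).1
    exact IsAddCyclic.card_addOrderOf_eq_totient hdn
  rw [Finset.sum_congr rfl (fun t ht => by
    rw [(Finset.mem_filter.mp ht).2]), Finset.sum_const, hcard, smul_eq_mul]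

private lemma reindex' (n k : ℕ) (hn : n ≠ 0) :
    ∑ d ∈ n.divisors, Nat.totient d * (if d ∣ k then (n / d).choose (k / d) else 0)
      = ∑ d ∈ (n.gcd k).divisors, Nat.totient d * Nat.choose (n / d) (k / d) := by
  have hdiv : (n.gcd k).divisors = n.divisors.filter (· ∣ k) := by
    ext d
    simp only [Nat.mem_divisors, Finset.mem_filter, Nat.dvd_gcd_iff]
    constructor
    · rintro ⟨⟨h1, h2⟩, -⟩; exact ⟨⟨h1, hn⟩, h2⟩
    · rintro ⟨⟨h1, -⟩, h2⟩
      refine ⟨⟨h1, h2⟩, fun hc => hn (Nat.eq_zero_of_gcd_eq_zero_left hc)⟩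
  rw [hdiv, Finset.sum_filter]
  exact Finset.sum_congr rfl fun d _ => by split <;> simp

end NecklaceAux

/-- The number of binary necklaces of length `n` with `k` ones equals
`(1/n) · ∑_{d ∣ gcd(n,k)} φ(d) · C(n/d, k/d)`. -/

theorem necklace_count (n k : ℕ) (hn : 1 ≤ n) (hk : k ≤ n) :
    NCard n k * n = ∑ d ∈ (Nat.gcd n k).divisors, Nat.totient d * Nat.choose (n / d) (k / d) := by
  haveI : NeZero n := ⟨by omega⟩
  rw [burnside' n k, Finset.sum_congr rfl (fun t _ => card_fixedBy' n k t),
    sum_over_group' n k, reindex' n k (by omega)]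
end

section
/- For integers 0 ≤ k ≤ n with n ≥ 1, the number of binary Lyndon words of length n with exactly k ones equals (1/n) · Σ_{d | gcd(n,k)} μ(d) · C(n/d, k/d), where μ is the Möbius function. -/
open Finset

/-- `w` (as the word `w 0 w 1 ⋯ w (n-1)`) is a Lyndon word: it is strictly
lexicographically smaller than each of its nontrivial cyclic rotations. -/
def IsLyndon (n : ℕ) (w : Fin n → Bool) : Prop :=
  ∀ t : ℕ, 0 < t → t < n → List.Lex (· < ·) (List.ofFn w) ((List.ofFn w).rotate t)


namespace LyndonAux

attribute [local instance] Classical.propDecidable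

set_option linter.unusedSectionVars false

variable {N : ℕ} [NeZero N]

/-- Rotation of a cyclic word by `t`. -/
def rot (t : ℕ) (w : ZMod N → Bool) : ZMod N → Bool := fun i => w (i + (t : ZMod N))

lemma rot_rot (s t : ℕ) (w : ZMod N → Bool) : rot s (rot t w) = rot (t + s) w := by
  funext i
  simp [rot, Nat.cast_add, add_assoc, add_comm (s : ZMod N) (t : ZMod N)]

lemma rot_zero (w : ZMod N → Bool) : rot 0 w = w := by
  funext i; simp [rot]

lemma rot_self (w : ZMod N → Bool) : rot N w = w := by
  funext i; simp [rot, ZMod.natCast_self]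

lemma rot_mod (t : ℕ) (w : ZMod N → Bool) : rot (t % N) w = rot t w := by
  funext i; simp [rot, ZMod.natCast_mod]

/-- `w` is `t`-periodic. -/
def hasPer (w : ZMod N → Bool) (t : ℕ) : Prop := rot t w = w

lemma hasPer_self (w : ZMod N → Bool) : hasPer w N := rot_self w

lemma hasPer_add {w : ZMod N → Bool} {s t : ℕ} (hs : hasPer w s) (ht : hasPer w t) :
    hasPer w (s + t) := by
  unfold hasPer at *
  rw [← rot_rot, hs, ht]

lemma hasPer_mul {w : ZMod N → Bool} {t : ℕ} (ht : hasPer w t) (m : ℕ) :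
    hasPer w (m * t) := by
  induction m with
  | zero => simpa [hasPer] using rot_zero w
  | succ m ih => rw [Nat.succ_mul]; exact hasPer_add ih ht

lemma rot_mul_self (m : ℕ) (w : ZMod N → Bool) : rot (m * N) w = w :=
  hasPer_mul (hasPer_self w) m

lemma rot_injective (t : ℕ) : Function.Injective (rot (N := N) t) := by
  intro u v huv
  have h1 : rot (N - t % N) (rot t u) = rot (N - t % N) (rot t v) := by rw [huv]
  rw [rot_rot, rot_rot] at h1
  have h2 : t + (N - t % N) = (t / N + 1) * N := by
    rw [Nat.add_mul, one_mul, mul_comm (t / N) N]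
    have := Nat.div_add_mod t N
    have h3 : t % N < N := Nat.mod_lt _ (NeZero.pos N)
    omega
  rw [h2, rot_mul_self, rot_mul_self] at h1
  exact h1

lemma hasPer_sub {w : ZMod N → Bool} {s t : ℕ} (hts : t ≤ s) (hs : hasPer w s)
    (ht : hasPer w t) : hasPer w (s - t) := by
  unfold hasPer at *
  apply rot_injective t
  rw [rot_rot, Nat.sub_add_cancel hts, hs, ht]

/-- The minimal period of `w`. -/
noncomputable def per {M : ℕ} (w : ZMod M → Bool) : ℕ :=
  if h : ∃ t, 0 < t ∧ hasPer w t then Nat.find h else 0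

lemma per_exists (w : ZMod N → Bool) : ∃ t, 0 < t ∧ hasPer w t :=
  ⟨N, NeZero.pos N, hasPer_self w⟩

lemma per_eq_find (w : ZMod N → Bool) : per w = Nat.find (per_exists w) := by
  rw [per, dif_pos (per_exists w)]

lemma per_pos (w : ZMod N → Bool) : 0 < per w := by
  rw [per_eq_find]; exact (Nat.find_spec (per_exists w)).1

lemma hasPer_per (w : ZMod N → Bool) : hasPer w (per w) := by
  rw [per_eq_find]; exact (Nat.find_spec (per_exists w)).2

lemma per_le {w : ZMod N → Bool} {t : ℕ} (htpos : 0 < t) (ht : hasPer w t) : per w ≤ t := by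
  rw [per_eq_find]; exact Nat.find_le ⟨htpos, ht⟩

lemma hasPer_iff_dvd {w : ZMod N → Bool} {t : ℕ} : hasPer w t ↔ per w ∣ t := by
  constructor
  · intro ht
    have hmul : hasPer w (per w * (t / per w)) := by
      rw [mul_comm]; exact hasPer_mul (hasPer_per w) _
    have hle : per w * (t / per w) ≤ t := Nat.mul_div_le t (per w)
    have hr : hasPer w (t - per w * (t / per w)) := hasPer_sub hle ht hmul
    have hrval : t - per w * (t / per w) = t % per w := by
      rw [Nat.mod_def]  -- maybe name differs
    by_contra hdvd
    have hrpos : 0 < t % per w := Nat.pos_of_ne_zero fun h => hdvd (Nat.dvd_of_mod_eq_zero h)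
    have := per_le hrpos (hrval ▸ hr)
    exact absurd this (Nat.not_le.mpr (Nat.mod_lt _ (per_pos w)))
  · rintro ⟨c, rfl⟩
    rw [mul_comm]; exact hasPer_mul (hasPer_per w) c

lemma per_dvd (w : ZMod N → Bool) : per w ∣ N := hasPer_iff_dvd.mp (hasPer_self w)

lemma per_le_card (w : ZMod N → Bool) : per w ≤ N := Nat.le_of_dvd (NeZero.pos N) (per_dvd w)

lemma per_congr {w u : ZMod N → Bool} (h : ∀ t, hasPer w t ↔ hasPer u t) : per w = per u := by
  apply le_antisymm
  · exact per_le (per_pos u) ((h _).mpr (hasPer_per u))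
  · exact per_le (per_pos w) ((h _).mp (hasPer_per w))

lemma rot_comm (s t : ℕ) (w : ZMod N → Bool) : rot s (rot t w) = rot t (rot s w) := by
  rw [rot_rot, rot_rot, Nat.add_comm]

lemma per_rot (t : ℕ) (w : ZMod N → Bool) : per (rot t w) = per w := by
  apply per_congr
  intro s
  unfold hasPer
  constructor
  · intro h
    apply rot_injective t
    rw [← rot_comm, h]
  · intro h
    rw [rot_comm, h]

lemma rot_eq_rot_iff {w : ZMod N → Bool} {s t : ℕ} (hst : s ≤ t) :
    rot s w = rot t w ↔ hasPer w (t - s) := by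
  constructor
  · intro h
    unfold hasPer
    apply rot_injective s
    rw [rot_rot, Nat.sub_add_cancel hst, h]
  · intro h
    have : rot (t - s) w = w := h
    calc rot s w = rot s (rot (t - s) w) := by rw [this]
    _ = rot (t - s + s) w := rot_rot _ _ _
    _ = rot t w := by rw [Nat.sub_add_cancel hst]

/-- For a primitive word, rotations with distinct indices `< N` are distinct. -/
lemma rot_inj_of_primitive {w : ZMod N → Bool} (hw : per w = N) {s t : ℕ}
    (hs : s < N) (ht : t < N) (h : rot s w = rot t w) : s = t := by
  rcases Nat.le_total s t with hle | hle
  · have := (rot_eq_rot_iff hle).mp h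
    rw [hasPer_iff_dvd, hw] at this
    have := Nat.eq_zero_of_dvd_of_lt this (by omega)
    omega
  · have := (rot_eq_rot_iff hle).mp h.symm
    rw [hasPer_iff_dvd, hw] at this
    have := Nat.eq_zero_of_dvd_of_lt this (by omega)
    omega

end LyndonAux

namespace LyndonAux

variable {N : ℕ} [NeZero N]

/-- Number of ones. -/
def ones (w : ZMod N → Bool) : ℕ := (univ.filter fun i => w i = true).card

lemma ones_rot (t : ℕ) (w : ZMod N → Bool) : ones (rot t w) = ones w := by
  unfold ones
  apply Finset.card_bij' (fun i _ => i + (t : ZMod N)) (fun i _ => i - (t : ZMod N))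
  · intro a ha
    simp only [mem_filter, mem_univ, true_and] at ha ⊢
    exact ha
  · intro a ha
    simp only [mem_filter, mem_univ, true_and] at ha ⊢
    show w (a - (t : ZMod N) + (t : ZMod N)) = true
    rwa [sub_add_cancel]
  · intro a _; exact add_sub_cancel_right a _
  · intro a _; exact sub_add_cancel a _

/-- The word as a list. -/
def toList (w : ZMod N → Bool) : List Bool := List.ofFn (fun i : Fin N => w ((i : ℕ) : ZMod N))

lemma toList_length (w : ZMod N → Bool) : (toList w).length = N := by simp [toList]

lemma toList_rot (t : ℕ) (w : ZMod N → Bool) : toList (rot t w) = (toList w).rotate t := by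
  apply List.ext_getElem
  · simp [toList]
  · intro i h1 h2
    rw [List.getElem_rotate]
    simp only [toList, List.getElem_ofFn, List.length_ofFn, Fin.cast]
    show rot t w ((i : ℕ) : ZMod N) = w ((((i + t) % N : ℕ)) : ZMod N)
    rw [ZMod.natCast_mod, Nat.cast_add]
    rfl

lemma toList_injective : Function.Injective (toList (N := N)) := by
  intro u v h
  have h2 := List.ofFn_injective h
  funext x
  have := congrFun h2 ⟨x.val, x.val_lt⟩
  simpa [ZMod.natCast_zmod_val] using this

/-- `w` is a Lyndon word (ZMod version). -/
def IsLyn (w : ZMod N → Bool) : Prop :=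
  ∀ t : ℕ, 0 < t → t < N → List.Lex (· < ·) (toList w) ((toList w).rotate t)

lemma IsLyn.primitive {w : ZMod N → Bool} (hw : IsLyn w) : per w = N := by
  rcases Nat.lt_or_ge (per w) N with h | h
  · exfalso
    have h1 := hw (per w) (per_pos w) h
    rw [← toList_rot, hasPer_per w] at h1
    exact Std.Asymm.asymm _ _ h1 h1
  · exact le_antisymm (per_le_card w) h

lemma IsLyn.unique_rot {w : ZMod N → Bool} (hw : IsLyn w) {t : ℕ} (ht : t < N)
    (hrot : IsLyn (rot t w)) : t = 0 := by
  by_contra h0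
  have htpos : 0 < t := Nat.pos_of_ne_zero h0
  have h1 : List.Lex (· < ·) (toList w) (toList (rot t w)) := by
    rw [toList_rot]; exact hw t htpos ht
  have h2 : List.Lex (· < ·) (toList (rot t w)) (toList w) := by
    have h3 := hrot (N - t) (by omega) (by omega)
    rw [← toList_rot, rot_rot, Nat.add_sub_cancel' (le_of_lt ht), rot_self] at h3
    exact h3
  exact Std.Asymm.asymm _ _ h1 h2

lemma exists_lyndon_rot {w : ZMod N → Bool} (hw : per w = N) :
    ∃ t < N, IsLyn (rot t w) := by
  obtain ⟨t0, ht0, hmin⟩ := Finset.exists_min_image (Finset.range N)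
    (fun t => toList (rot t w)) ⟨0, Finset.mem_range.mpr (NeZero.pos N)⟩
  rw [Finset.mem_range] at ht0
  refine ⟨t0, ht0, ?_⟩
  intro t htpos htlt
  rw [← toList_rot, rot_rot]
  have hs : (t0 + t) % N ∈ Finset.range N :=
    Finset.mem_range.mpr (Nat.mod_lt _ (NeZero.pos N))
  have hle := hmin _ hs
  rw [show rot ((t0 + t) % N) w = rot (t0 + t) w from rot_mod _ w] at hle
  rcases lt_or_eq_of_le hle with hlt | heq
  · exact hlt
  · exfalso
    have hEq : rot t0 w = rot (t0 + t) w := toList_injective heq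
    have hP : hasPer w (t0 + t - t0) := (rot_eq_rot_iff (Nat.le_add_right _ _)).mp hEq
    rw [Nat.add_sub_cancel_left, hasPer_iff_dvd, hw] at hP
    have := Nat.eq_zero_of_dvd_of_lt hP htlt
    omega

end LyndonAux

namespace LyndonAux

variable {N : ℕ} [NeZero N]

lemma neZero_of_dvd {M e : ℕ} [NeZero M] (he : e ∣ M) : NeZero e :=
  ⟨fun h => NeZero.ne M (Nat.eq_zero_of_zero_dvd (h ▸ he))⟩

section Extend

variable {e : ℕ} (he : e ∣ N)

/-- Periodic extension of a word of length `e` to length `N`. -/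
def extend (w0 : ZMod e → Bool) : ZMod N → Bool :=
  fun i => w0 (ZMod.castHom he (ZMod e) i)

lemma rot_extend (t : ℕ) (w0 : ZMod e → Bool) :
    rot t (extend he w0) = extend he (rot t w0) := by
  funext i
  simp [rot, extend, map_add, map_natCast]

lemma castHom_surj : Function.Surjective (ZMod.castHom he (ZMod e)) := by
  haveI : NeZero e := neZero_of_dvd he
  intro j
  exact ⟨((j.val : ℕ) : ZMod N), by rw [map_natCast]; exact ZMod.natCast_zmod_val j⟩

lemma extend_injective : Function.Injective (extend (N := N) he) := by
  intro u v h
  funext j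
  obtain ⟨i, rfl⟩ := castHom_surj he j
  exact congrFun h i

lemma hasPer_extend_iff {w0 : ZMod e → Bool} {t : ℕ} :
    hasPer (extend he w0) t ↔ hasPer w0 t := by
  unfold hasPer
  rw [rot_extend]
  exact ⟨fun h => extend_injective he h, fun h => by rw [h]⟩

lemma per_extend (w0 : ZMod e → Bool) : per (extend he w0) = per w0 := by
  haveI : NeZero e := neZero_of_dvd he
  apply le_antisymm
  · exact per_le (per_pos w0) ((hasPer_extend_iff he).mpr (hasPer_per w0))
  · exact per_le (per_pos (extend he w0)) ((hasPer_extend_iff he).mp (hasPer_per (extend he w0)))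

/-- Restriction of a word to its first `e` letters. -/
def core (w : ZMod N → Bool) : ZMod e → Bool :=
  fun j => w ((j.val : ℕ) : ZMod N)

lemma eq_mod_of_hasPer {w : ZMod N → Bool} (hP : hasPer w e) (a : ℕ) :
    w ((a : ℕ) : ZMod N) = w (((a % e : ℕ)) : ZMod N) := by
  have h1 : hasPer w (e * (a / e)) := by rw [mul_comm]; exact hasPer_mul hP _
  have h2 := congrFun (h1 : rot (e * (a / e)) w = w) (((a % e : ℕ)) : ZMod N)
  rw [rot] at h2
  rw [← h2, ← Nat.cast_add, Nat.mod_add_div]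

lemma extend_core {w : ZMod N → Bool} (hP : hasPer w e) : extend he (core (N := N) w) = w := by
  haveI : NeZero e := neZero_of_dvd he
  funext i
  show core w (ZMod.castHom he (ZMod e) i) = w i
  rw [ZMod.castHom_apply]
  unfold core
  rw [← ZMod.natCast_val i, ZMod.val_natCast, ← eq_mod_of_hasPer hP, ZMod.natCast_zmod_val]

lemma card_fiber (j : ZMod e) :
    (univ.filter fun i : ZMod N => ZMod.castHom he (ZMod e) i = j).card = N / e := by
  haveI : NeZero e := neZero_of_dvd he
  have hmul : e * (N / e) = N := Nat.mul_div_cancel' he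
  rw [← Finset.card_range (N / e)]
  apply Finset.card_bij' (fun a _ => a.val / e)
      (fun q _ => (((j.val + e * q : ℕ)) : ZMod N))
  · intro a ha
    rw [Finset.mem_range]
    exact Nat.div_lt_div_of_lt_of_dvd he a.val_lt
  · intro q hq
    rw [Finset.mem_range] at hq
    have hlt : j.val + e * q < N := by
      have h1 : e * (q + 1) ≤ e * (N / e) := Nat.mul_le_mul_left e hq
      have h2 : j.val < e := j.val_lt
      have h3 : e * (q + 1) = e * q + e := by ring
      omega
    simp only [Finset.mem_filter, Finset.mem_univ, true_and]
    rw [map_natCast]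
    push_cast
    rw [ZMod.natCast_self, zero_mul, add_zero, ZMod.natCast_zmod_val]
  · intro a ha
    simp only [Finset.mem_filter, Finset.mem_univ, true_and] at ha
    have hval : a.val % e = j.val := by
      have : (ZMod.castHom he (ZMod e)) a = ((a.val : ℕ) : ZMod e) := by
        rw [ZMod.castHom_apply, ← ZMod.natCast_val]
      rw [this] at ha
      rw [← ha, ZMod.val_natCast]
    rw [← hval, Nat.mod_add_div, ZMod.natCast_zmod_val]
  · intro q hq
    rw [Finset.mem_range] at hq
    have hlt : j.val + e * q < N := by
      have h1 : e * (q + 1) ≤ e * (N / e) := Nat.mul_le_mul_left e hq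
      have h2 : j.val < e := j.val_lt
      have h3 : e * (q + 1) = e * q + e := by ring
      omega
    rw [ZMod.val_natCast, Nat.mod_eq_of_lt hlt, Nat.add_mul_div_left _ _ (NeZero.pos e),
      Nat.div_eq_of_lt j.val_lt, zero_add]

lemma ones_extend [NeZero e] (w0 : ZMod e → Bool) :
    ones (extend he w0) = (N / e) * ones w0 := by
  unfold ones
  rw [Finset.card_eq_sum_card_fiberwise
    (f := ZMod.castHom he (ZMod e)) (t := univ.filter fun j => w0 j = true)
    (fun x hx => by
      simp only [Finset.mem_coe, Finset.mem_filter, Finset.mem_univ, true_and] at hx ⊢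
      exact hx)]
  have hstep : ∀ j ∈ univ.filter (fun j => w0 j = true),
      ((univ.filter fun w => extend he w0 w = true).filter
        fun i => ZMod.castHom he (ZMod e) i = j).card = N / e := by
    intro j hj
    simp only [Finset.mem_filter, Finset.mem_univ, true_and] at hj
    rw [← card_fiber he j]
    congr 1
    ext i
    simp only [Finset.mem_filter, Finset.mem_univ, true_and]
    exact ⟨fun h => h.2, fun h => ⟨by show w0 _ = true; rw [h]; exact hj, h⟩⟩
  rw [Finset.sum_congr rfl hstep, Finset.sum_const, smul_eq_mul]
  exact mul_comm _ _

end Extend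

end LyndonAux

namespace LyndonAux

attribute [local instance] Classical.propDecidable

/-- Instance-free ones count. -/
noncomputable def onesN {M : ℕ} (w : ZMod M → Bool) : ℕ := Nat.card {i : ZMod M // w i = true}

/-- Number of primitive words of length `M` with `J` ones. -/
noncomputable def PC (M J : ℕ) : ℕ :=
  Nat.card {w : ZMod M → Bool // onesN w = J ∧ per w = M}

/-- Number of Lyndon words of length `M` with `J` ones. -/
noncomputable def LC (M J : ℕ) : ℕ :=
  Nat.card {w : ZMod M → Bool // IsLyn w ∧ onesN w = J}

variable {N : ℕ} [NeZero N]

lemma onesN_eq (w : ZMod N → Bool) : onesN w = ones w := by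
  rw [onesN, Nat.card_eq_fintype_card, Fintype.card_subtype]
  rfl

lemma PC_eq (J : ℕ) :
    PC N J = (univ.filter fun w : ZMod N → Bool => ones w = J ∧ per w = N).card := by
  rw [PC, Nat.card_congr (Equiv.subtypeEquivRight (q := fun w => ones w = J ∧ per w = N)
    (fun w => by rw [onesN_eq])), Nat.card_eq_fintype_card, Fintype.card_subtype]

lemma LC_eq (J : ℕ) :
    LC N J = (univ.filter fun w : ZMod N → Bool => IsLyn w ∧ ones w = J).card := by
  rw [LC, Nat.card_congr (Equiv.subtypeEquivRight (q := fun w => IsLyn w ∧ ones w = J)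
    (fun w => by rw [onesN_eq])), Nat.card_eq_fintype_card, Fintype.card_subtype]

/-- Step A: the number of words with `K` ones is `C(N,K)`. -/
lemma card_ones (K : ℕ) :
    (univ.filter fun w : ZMod N → Bool => ones w = K).card = N.choose K := by
  rw [← Fintype.card_subtype]
  have E : {w : ZMod N → Bool // ones w = K} ≃ {s : Finset (ZMod N) // s.card = K} :=
    { toFun := fun w => ⟨univ.filter fun i => w.1 i = true, w.2⟩
      invFun := fun s => ⟨fun i => decide (i ∈ s.1), by
        show ones _ = K
        unfold ones
        rw [show (univ.filter fun i : ZMod N => (decide (i ∈ s.1)) = true) = s.1 by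
          ext i; simp]
        exact s.2⟩
      left_inv := fun w => Subtype.ext (funext fun i => by
        cases hb : w.1 i <;> simp [hb])
      right_inv := fun s => Subtype.ext (by ext i; simp) }
  rw [Fintype.card_congr E, Fintype.card_finset_len, ZMod.card]

/-- Step B aux: the fiber statistic lands in divisors of the gcd. -/
lemma div_per_mem {w : ZMod N → Bool} {K : ℕ} (hK : ones w = K) :
    N / per w ∈ (N.gcd K).divisors := by
  have hd : per w ∣ N := per_dvd w
  haveI : NeZero (per w) := ⟨Nat.pos_iff_ne_zero.mp (per_pos w)⟩
  rw [Nat.mem_divisors]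
  refine ⟨Nat.dvd_gcd (Nat.div_dvd_of_dvd hd) ?_, Nat.gcd_ne_zero_left (NeZero.ne N)⟩
  have hw : extend hd (core w) = w := extend_core hd (hasPer_per w)
  have h2 := ones_extend hd (core w)
  rw [hw] at h2
  exact hK ▸ ⟨ones (core w), h2⟩

/-- Step C: fibers are counted by primitive words of shorter length. -/
lemma card_fiber_per {K d : ℕ} (hd : d ∣ N) (hdK : d ∣ K) (hdpos : 0 < d) :
    (univ.filter fun w : ZMod N → Bool => ones w = K ∧ N / per w = d).card
      = PC (N / d) (K / d) := by
  have hNpos : 0 < N := NeZero.pos N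
  haveI : NeZero (N / d) := ⟨Nat.pos_iff_ne_zero.mp (Nat.div_pos (Nat.le_of_dvd hNpos hd) hdpos)⟩
  set e := N / d with hedef
  have he : e ∣ N := Nat.div_dvd_of_dvd hd
  have hNe : N / e = d := by rw [hedef, Nat.div_div_self hd (NeZero.ne N)]
  rw [PC_eq]
  apply Finset.card_bij' (fun w _ => core (e := e) w) (fun w0 _ => extend he w0)
  · -- maps into target
    intro w hw
    simp only [Finset.mem_filter, Finset.mem_univ, true_and] at hw ⊢
    obtain ⟨hK, hper⟩ := hw
    have hpe : per w = e := by
      rw [hedef, ← hper, Nat.div_div_self (per_dvd w) (NeZero.ne N)]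
    have hP : hasPer w e := hpe ▸ hasPer_per w
    have hw' : extend he (core w) = w := extend_core he hP
    have hones : (N / e) * ones (core (e := e) w) = K := by
      rw [← ones_extend he (core w), hw', hK]
    constructor
    · rw [← hones, hNe, Nat.mul_div_cancel_left _ hdpos]
    · have := per_extend he (core (e := e) w)
      rw [hw', hpe] at this
      exact this.symm
  · -- maps back
    intro w0 hw0
    simp only [Finset.mem_filter, Finset.mem_univ, true_and] at hw0 ⊢
    obtain ⟨hK0, hper0⟩ := hw0
    constructor
    · rw [ones_extend he w0, hK0, hNe, Nat.mul_div_cancel' hdK]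
    · rw [per_extend he w0, hper0, hNe]
  · -- left inverse
    intro w hw
    simp only [Finset.mem_filter, Finset.mem_univ, true_and] at hw
    have hpe : per w = e := by
      rw [hedef, ← hw.2, Nat.div_div_self (per_dvd w) (NeZero.ne N)]
    exact extend_core he (hpe ▸ hasPer_per w)
  · -- right inverse
    intro w0 hw0
    simp only [Finset.mem_filter, Finset.mem_univ, true_and] at hw0
    apply extend_injective he
    apply extend_core he
    rw [hasPer_extend_iff he]
    have := hasPer_per w0
    rwa [hw0.2] at this

/-- Step B+C: the binomial coefficient decomposes along divisors of the gcd. -/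
lemma choose_eq_sum_PC (K : ℕ) (hK : K ≤ N) :
    N.choose K = ∑ d ∈ (N.gcd K).divisors, PC (N / d) (K / d) := by
  rw [← card_ones (N := N) K]
  rw [Finset.card_eq_sum_card_fiberwise (f := fun w => N / per w)
    (t := (N.gcd K).divisors) (fun w hw => by
      simp only [Finset.mem_coe, Finset.mem_filter, Finset.mem_univ, true_and] at hw ⊢
      exact div_per_mem hw)]
  apply Finset.sum_congr rfl
  intro d hd
  rw [Nat.mem_divisors] at hd
  have hdN : d ∣ N := hd.1.trans (Nat.gcd_dvd_left _ _)
  have hdK : d ∣ K := hd.1.trans (Nat.gcd_dvd_right _ _)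
  have hdpos : 0 < d := Nat.pos_of_ne_zero (fun h => hd.2 (by
    subst h; exact Nat.eq_zero_of_zero_dvd hd.1 ▸ rfl))
  rw [← card_fiber_per hdN hdK hdpos]
  congr 1
  ext w
  simp only [Finset.mem_filter, Finset.mem_univ, true_and, and_assoc]

end LyndonAux

namespace LyndonAux

attribute [local instance] Classical.propDecidable

variable {N : ℕ} [NeZero N]

/-- Step D: primitive words are counted by `N` times the Lyndon words. -/
lemma PC_eq_mul_LC (K : ℕ) : PC N K = N * LC N K := by
  rw [PC_eq, LC_eq, ← Fintype.card_subtype, ← Fintype.card_subtype]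
  let f : Fin N × {u : ZMod N → Bool // IsLyn u ∧ ones u = K} →
      {w : ZMod N → Bool // ones w = K ∧ per w = N} := fun p =>
    ⟨rot p.1.val p.2.1, by
      obtain ⟨hl, ho⟩ := p.2.2
      exact ⟨by rw [ones_rot]; exact ho, by rw [per_rot]; exact hl.primitive⟩⟩
  have hf : Function.Bijective f := by
    constructor
    · rintro ⟨⟨t, ht⟩, u, hu⟩ ⟨⟨s, hs⟩, v, hv⟩ h
      have h1 : rot t u = rot s v := congrArg Subtype.val h
      obtain ⟨hul, huo⟩ := hu
      obtain ⟨hvl, hvo⟩ := hv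
      have h2 : rot (t + (N - s)) u = v := by
        rw [← rot_rot, h1, rot_rot, Nat.add_sub_cancel' (le_of_lt hs), rot_self]
      have h3 : IsLyn (rot ((t + (N - s)) % N) u) := by
        rw [rot_mod, h2]; exact hvl
      have h4 := hul.unique_rot (Nat.mod_lt _ (NeZero.pos N)) h3
      have h5 : v = u := by
        rw [← h2, ← rot_mod, h4, rot_zero]
      subst h5
      have h6 : t = s := rot_inj_of_primitive hul.primitive ht hs h1
      simp only [Prod.mk.injEq, Fin.mk.injEq, Subtype.mk.injEq]
      exact ⟨h6, trivial⟩
    · rintro ⟨w, hK, hper⟩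
      obtain ⟨t, htN, hlyn⟩ := exists_lyndon_rot hper
      refine ⟨⟨⟨(N - t) % N, Nat.mod_lt _ (NeZero.pos N)⟩,
        ⟨rot t w, hlyn, by rw [ones_rot]; exact hK⟩⟩, ?_⟩
      apply Subtype.ext
      show rot ((N - t) % N) (rot t w) = w
      rw [rot_mod, rot_rot, Nat.add_sub_cancel' (le_of_lt htN), rot_self]
  calc Fintype.card {w : ZMod N → Bool // ones w = K ∧ per w = N}
      = Fintype.card (Fin N × {u : ZMod N → Bool // IsLyn u ∧ ones u = K}) :=
        (Fintype.card_congr (Equiv.ofBijective f hf)).symm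
    _ = N * Fintype.card {u : ZMod N → Bool // IsLyn u ∧ ones u = K} := by
        rw [Fintype.card_prod, Fintype.card_fin]

end LyndonAux

namespace LyndonAux

attribute [local instance] Classical.propDecidable

variable {N : ℕ} [NeZero N]

/-- The equivalence between `Fin n` and `ZMod n`. -/
def finZMod (N : ℕ) [NeZero N] : Fin N ≃ ZMod N where
  toFun i := ((i : ℕ) : ZMod N)
  invFun x := ⟨x.val, x.val_lt⟩
  left_inv i := by
    apply Fin.ext
    show (((i : ℕ) : ZMod N)).val = (i : ℕ)
    rw [ZMod.val_natCast, Nat.mod_eq_of_lt i.isLt]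
  right_inv x := ZMod.natCast_zmod_val x

lemma toList_comp (w : Fin N → Bool) :
    toList (fun x : ZMod N => w ((finZMod N).symm x)) = List.ofFn w := by
  unfold toList
  congr 1
  funext i
  show w ((finZMod N).symm ((i : ℕ) : ZMod N)) = w i
  congr 1
  apply Fin.ext
  show (((i : ℕ) : ZMod N)).val = (i : ℕ)
  rw [ZMod.val_natCast, Nat.mod_eq_of_lt i.isLt]

lemma isLyn_comp (w : Fin N → Bool) :
    IsLyn (fun x : ZMod N => w ((finZMod N).symm x)) ↔ IsLyndon N w := by
  unfold IsLyn IsLyndon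
  rw [toList_comp]

lemma ones_comp (w : Fin N → Bool) :
    ones (fun x : ZMod N => w ((finZMod N).symm x))
      = (univ.filter fun i => w i = true).card := by
  unfold ones
  apply Finset.card_bij' (fun x _ => (finZMod N).symm x) (fun i _ => finZMod N i)
  · intro x hx
    simpa using hx
  · intro i hi
    simp only [mem_filter, mem_univ, true_and] at hi ⊢
    rw [Equiv.symm_apply_apply]
    exact hi
  · intro x _; exact Equiv.apply_symm_apply _ _
  · intro i _; exact Equiv.symm_apply_apply _ _

/-- Step E: the Lyndon count over `Fin` equals the Lyndon count over `ZMod`. -/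
lemma card_lyndon_fin (K : ℕ) :
    Nat.card {w : Fin N → Bool //
        IsLyndon N w ∧ (Finset.univ.filter (fun i => w i = true)).card = K} = LC N K := by
  rw [LC]
  apply Nat.card_congr
  apply (Equiv.arrowCongr (finZMod N) (Equiv.refl Bool)).subtypeEquiv
  intro w
  show IsLyndon N w ∧ _ ↔ IsLyn (fun x => w ((finZMod N).symm x)) ∧
    onesN (fun x => w ((finZMod N).symm x)) = K
  rw [isLyn_comp, onesN_eq, ones_comp]

/-- The main counting identity, ℕ version. -/
lemma key_identity (n' k' : ℕ) (hn' : 0 < n') (hk' : k' ≤ n') (hcop : Nat.Coprime n' k')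
    (m : ℕ) (hm : 0 < m) :
    ∑ d ∈ m.divisors, (n' * d) * LC (n' * d) (k' * d) = (n' * m).choose (k' * m) := by
  haveI : NeZero (n' * m) := ⟨Nat.mul_ne_zero (by omega) (by omega)⟩
  have hgcd : (n' * m).gcd (k' * m) = m := by
    rw [Nat.gcd_mul_right, hcop.gcd_eq_one, one_mul]
  rw [choose_eq_sum_PC (k' * m) (Nat.mul_le_mul_right m hk'), hgcd]
  have step1 : ∑ d ∈ m.divisors, PC (n' * m / d) (k' * m / d)
      = ∑ d ∈ m.divisors, PC (n' * (m / d)) (k' * (m / d)) := by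
    apply Finset.sum_congr rfl
    intro d hd
    rw [Nat.mem_divisors] at hd
    rw [Nat.mul_div_assoc n' hd.1, Nat.mul_div_assoc k' hd.1]
  rw [step1, Nat.sum_div_divisors m (fun d => PC (n' * d) (k' * d))]
  apply Finset.sum_congr rfl
  intro d hd
  rw [Nat.mem_divisors] at hd
  have hdpos : 0 < d := Nat.pos_of_dvd_of_pos hd.1 hm
  haveI : NeZero (n' * d) := ⟨Nat.mul_ne_zero (by omega) (by omega)⟩
  rw [PC_eq_mul_LC]

open ArithmeticFunction in
/-- The main theorem, `ZMod` version. -/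
theorem main (n k : ℕ) (hn : 1 ≤ n) (hk : k ≤ n) :
    (LC n k : ℤ) * n =
      ∑ d ∈ (Nat.gcd n k).divisors,
        ArithmeticFunction.moebius d * ((n / d).choose (k / d) : ℤ) := by
  set g0 := Nat.gcd n k with hg0
  have hg0pos : 0 < g0 := Nat.gcd_pos_of_pos_left k hn
  set n' := n / g0 with hn'def
  set k' := k / g0 with hk'def
  have hgn : g0 ∣ n := Nat.gcd_dvd_left n k
  have hgk : g0 ∣ k := Nat.gcd_dvd_right n k
  have hn'g : n' * g0 = n := Nat.div_mul_cancel hgn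
  have hk'g : k' * g0 = k := Nat.div_mul_cancel hgk
  have hn'pos : 0 < n' := by
    rw [hn'def]
    exact Nat.div_pos (Nat.le_of_dvd (by omega) hgn) hg0pos
  have hk'le : k' ≤ n' := Nat.div_le_div_right hk
  have hcop : Nat.Coprime n' k' := Nat.coprime_div_gcd_div_gcd hg0pos
  have hinv := (sum_eq_iff_sum_smul_moebius_eq
    (f := fun d => ((n' * d) * LC (n' * d) (k' * d) : ℤ))
    (g := fun m => ((n' * m).choose (k' * m) : ℤ))).mp
    (fun m hm => by
      exact_mod_cast congrArg (Nat.cast (R := ℤ))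
        (key_identity n' k' hn'pos hk'le hcop m hm)) g0 hg0pos
  rw [Nat.sum_divisorsAntidiagonal
    (f := fun d e => (moebius d : ℤ) • ((n' * e).choose (k' * e) : ℤ))] at hinv
  have hcast : ((n' : ℤ)) * (g0 : ℤ) = (n : ℤ) := by exact_mod_cast hn'g
  calc (LC n k : ℤ) * n
      = (n' : ℤ) * (g0 : ℤ) * (LC (n' * g0) (k' * g0) : ℤ) := by
        rw [hn'g, hk'g, hcast]; ring
    _ = ∑ d ∈ g0.divisors,
          (moebius d : ℤ) • ((n' * (g0 / d)).choose (k' * (g0 / d)) : ℤ) := hinv.symm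
    _ = ∑ d ∈ g0.divisors, (moebius d : ℤ) * ((n / d).choose (k / d) : ℤ) := by
        apply Finset.sum_congr rfl
        intro d hd
        rw [Nat.mem_divisors] at hd
        rw [smul_eq_mul, ← Nat.mul_div_assoc n' hd.1, ← Nat.mul_div_assoc k' hd.1,
          hn'g, hk'g]

end LyndonAux


/-- The number of binary Lyndon words of length `n` with `k` ones equals
`(1/n) · ∑_{d ∣ gcd(n,k)} μ(d) · C(n/d, k/d)`. -/
theorem lyndon_count (n k : ℕ) (hn : 1 ≤ n) (hk : k ≤ n) :
    (Nat.card {w : Fin n → Bool //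
        IsLyndon n w ∧ (Finset.univ.filter (fun i => w i = true)).card = k} : ℤ) * n =
      ∑ d ∈ (Nat.gcd n k).divisors,
        ArithmeticFunction.moebius d * ((n / d).choose (k / d) : ℤ) := by
  haveI : NeZero n := ⟨by omega⟩
  rw [LyndonAux.card_lyndon_fin k]
  exact LyndonAux.main n k hn hk
end

section
/- For any n ≥ 1, the polynomial identity Σ_{k=0}^{n−1} |S_1(n,k)| x^k · (1+x) · n = Σ_{d | n} μ(d) · (1 − (−x)^d)^{n/d} holds in ℤ[x], where S_1(n,k) is the set of k-element subsets of {1,…,n−1} whose elements sum to 1 modulo n. -/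
open Finset

namespace S1Aux

open Polynomial

/-- Sum of Möbius over divisors. -/
lemma sum_moebius_divisors (d : ℕ) (hd : d ≠ 0) :
    ∑ c ∈ d.divisors, (ArithmeticFunction.moebius c : ℤ) = if d = 1 then 1 else 0 := by
  have h := congrArg (fun f : ArithmeticFunction ℤ => f d)
    ArithmeticFunction.moebius_mul_coe_zeta
  simp only [ArithmeticFunction.coe_mul_zeta_apply, ArithmeticFunction.one_apply] at h
  exact h

lemma geom_sum_root {n : ℕ} (hn : 0 < n) {ζ : ℂ} (h : ζ ^ n = 1) :
    ∑ t ∈ range n, ζ ^ t = if ζ = 1 then (n : ℂ) else 0 := by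
  split_ifs with h1
  · simp [h1]
  · rw [geom_sum_eq h1, h]; simp

lemma prod_one_add_mul_root {m : ℕ} (hm : 0 < m) {ζ : ℂ} (hζ : IsPrimitiveRoot ζ m) (z : ℂ) :
    ∏ i ∈ range m, (1 + z * ζ ^ i) = 1 - (-z) ^ m := by
  rcases eq_or_ne z 0 with rfl | hz
  · simp [zero_pow hm.ne']
  · have key := X_pow_sub_C_eq_prod hζ hm (one_pow m)
    have h2 := congrArg (Polynomial.eval (-z⁻¹)) key
    simp only [eval_sub, eval_pow, eval_X, eval_C, eval_prod, mul_one] at h2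
    have hzz : (-z) * (-z⁻¹) = 1 := by
      rw [neg_mul_neg, mul_inv_cancel₀ hz]
    calc ∏ i ∈ range m, (1 + z * ζ ^ i)
        = ∏ i ∈ range m, ((-z) * (-z⁻¹ - ζ ^ i)) := by
          refine prod_congr rfl fun i _ => ?_
          rw [mul_sub, hzz]; ring
      _ = (-z) ^ m * ∏ i ∈ range m, (-z⁻¹ - ζ ^ i) := by
          rw [prod_mul_distrib, prod_const, card_range]
      _ = (-z) ^ m * ((-z⁻¹) ^ m - 1) := by rw [← h2]
      _ = 1 - (-z) ^ m := by rw [mul_sub, ← mul_pow, hzz, one_pow, mul_one]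

lemma periodic_shift (F : ℕ → ℂ) (m : ℕ) (h : ∀ i, F (i + m) = F i) :
    ∀ g i, F (g * m + i) = F i := by
  intro g
  induction g with
  | zero => simp
  | succ g ih =>
      intro i
      have : (g + 1) * m + i = (g * m + i) + m := by ring
      rw [this, h, ih]

lemma prod_range_mul_periodic (F : ℕ → ℂ) (m g : ℕ) (h : ∀ i, F (i + m) = F i) :
    ∏ i ∈ range (g * m), F i = (∏ i ∈ range m, F i) ^ g := by
  induction g with
  | zero => simp
  | succ g ih =>
      have : (g + 1) * m = g * m + m := by ring
      rw [this, prod_range_add, ih, pow_succ]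
      congr 1
      exact prod_congr rfl fun i _ => periodic_shift F m h g i

lemma isPrimitiveRoot_pow_gcd {n : ℕ} (hn : 0 < n) {ω : ℂ} (hω : IsPrimitiveRoot ω n)
    (t : ℕ) : IsPrimitiveRoot (ω ^ t) (n / Nat.gcd t n) := by
  have hg : 0 < Nat.gcd t n := Nat.gcd_pos_of_pos_right t hn
  have hgn : Nat.gcd t n ∣ n := Nat.gcd_dvd_right t n
  have hgt : Nat.gcd t n ∣ t := Nat.gcd_dvd_left t n
  constructor
  · rw [← pow_mul]
    have : t * (n / Nat.gcd t n) = n * (t / Nat.gcd t n) := by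
      apply Nat.eq_of_mul_eq_mul_left hg
      calc Nat.gcd t n * (t * (n / Nat.gcd t n))
          = t * (Nat.gcd t n * (n / Nat.gcd t n)) := by ring
        _ = t * n := by rw [Nat.mul_div_cancel' hgn]
        _ = (Nat.gcd t n * (t / Nat.gcd t n)) * n := by rw [Nat.mul_div_cancel' hgt]
        _ = Nat.gcd t n * (n * (t / Nat.gcd t n)) := by ring
    rw [this, pow_mul, hω.pow_eq_one, one_pow]
  · intro l hl
    rw [← pow_mul] at hl
    have hdvd : n ∣ t * l := hω.dvd_of_pow_eq_one _ hl
    have h1 : n / Nat.gcd t n ∣ (t / Nat.gcd t n) * l := by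
      rcases hdvd with ⟨c, hc⟩
      refine ⟨c, ?_⟩
      apply Nat.eq_of_mul_eq_mul_left hg
      rw [← Nat.mul_assoc, Nat.mul_div_cancel' hgt, hc, ← Nat.mul_assoc,
        Nat.mul_div_cancel' hgn]
    exact (Nat.coprime_div_gcd_div_gcd hg).symm.dvd_of_dvd_mul_left h1

lemma sum_filter_gcd_eq (n g : ℕ) (hn : 0 < n) (hg : g ∣ n) (F : ℕ → ℂ) :
    ∑ t ∈ (range n).filter (fun t => Nat.gcd t n = g), F t
      = ∑ s ∈ (range (n / g)).filter (fun s => Nat.gcd s (n / g) = 1), F (g * s) := by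
  have hg0 : 0 < g := Nat.pos_of_dvd_of_pos hg hn
  refine sum_nbij' (fun t => t / g) (fun s => g * s) ?_ ?_ ?_ ?_ ?_
  · intro t ht
    simp only [mem_filter, mem_range] at ht ⊢
    obtain ⟨htn, htg⟩ := ht
    have hgt : g ∣ t := htg ▸ Nat.gcd_dvd_left t n
    constructor
    · exact Nat.div_lt_div_of_lt_of_dvd hg htn
    · have := Nat.coprime_div_gcd_div_gcd (htg ▸ hg0 : 0 < Nat.gcd t n)
      rw [htg] at this
      exact this
  · intro s hs
    simp only [mem_filter, mem_range] at hs ⊢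
    obtain ⟨hsn, hsc⟩ := hs
    constructor
    · calc g * s < g * (n / g) := (Nat.mul_lt_mul_left hg0).mpr hsn
        _ = n := Nat.mul_div_cancel' hg
    · conv_lhs => rw [← Nat.mul_div_cancel' hg]
      rw [Nat.gcd_mul_left, hsc, Nat.mul_one]
  · intro t ht
    simp only [mem_filter, mem_range] at ht
    exact Nat.mul_div_cancel' (ht.2 ▸ Nat.gcd_dvd_left t n)
  · intro s hs
    exact Nat.mul_div_cancel_left s hg0
  · intro t ht
    simp only [mem_filter, mem_range] at ht
    rw [Nat.mul_div_cancel' (ht.2 ▸ Nat.gcd_dvd_left t n)]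


/-- Decompose a sum over `range n` into gcd fibers. -/
lemma sum_range_eq_sum_gcd_fibers (n : ℕ) (hn : 0 < n) (F : ℕ → ℂ) :
    ∑ t ∈ range n, F t
      = ∑ g ∈ n.divisors, ∑ t ∈ (range n).filter (fun t => Nat.gcd t n = g), F t := by
  symm
  apply sum_fiberwise_of_maps_to
  intro t _
  exact Nat.mem_divisors.mpr ⟨Nat.gcd_dvd_right t n, hn.ne'⟩

/-- The sum of the primitive `d`-th roots of unity is `μ d`. -/
lemma sum_primitiveRoots_moebius : ∀ d : ℕ, 0 < d → ∀ ζ : ℂ, IsPrimitiveRoot ζ d →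
    ∑ s ∈ (range d).filter (fun s => Nat.gcd s d = 1), ζ ^ s
      = ((ArithmeticFunction.moebius d : ℤ) : ℂ) := by
  intro d
  induction d using Nat.strong_induction_on with
  | _ d ih =>
    intro hd ζ hζ
    rcases eq_or_lt_of_le (show 1 ≤ d from hd) with h1 | h1
    · -- d = 1
      rw [← h1]
      norm_num
    · -- d > 1
      have hζ1 : ζ ≠ 1 := hζ.ne_one h1
      have h0 : ∑ t ∈ range d, ζ ^ t = 0 := by
        rw [geom_sum_root hd hζ.pow_eq_one, if_neg hζ1]
      rw [sum_range_eq_sum_gcd_fibers d hd] at h0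
      have hterm : ∀ g ∈ d.divisors, g ≠ 1 →
          ∑ t ∈ (range d).filter (fun t => Nat.gcd t d = g), ζ ^ t
            = ((ArithmeticFunction.moebius (d / g) : ℤ) : ℂ) := by
        intro g hg hg1
        obtain ⟨hgd, -⟩ := Nat.mem_divisors.mp hg
        have hg0 : 0 < g := Nat.pos_of_dvd_of_pos hgd hd
        rw [sum_filter_gcd_eq d g hd hgd]
        have hprim : IsPrimitiveRoot (ζ ^ g) (d / g) := by
          have := isPrimitiveRoot_pow_gcd hd hζ g
          rwa [Nat.gcd_eq_left hgd] at this
        have hdg : d / g < d := Nat.div_lt_self hd (lt_of_le_of_ne hg0 (Ne.symm hg1))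
        have hdg0 : 0 < d / g := Nat.div_pos (Nat.le_of_dvd hd hgd) hg0
        rw [← ih (d / g) hdg hdg0 (ζ ^ g) hprim]
        exact sum_congr rfl fun s _ => by rw [pow_mul]
      -- split off g = 1
      have h1mem : (1 : ℕ) ∈ d.divisors := Nat.one_mem_divisors.mpr hd.ne'
      rw [← Finset.add_sum_erase _ _ h1mem] at h0
      have hrest : ∑ g ∈ d.divisors.erase 1,
          ∑ t ∈ (range d).filter (fun t => Nat.gcd t d = g), ζ ^ t
            = ∑ g ∈ d.divisors.erase 1, ((ArithmeticFunction.moebius (d / g) : ℤ) : ℂ) := by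
        refine sum_congr rfl fun g hg => ?_
        exact hterm g (Finset.mem_of_mem_erase hg) (Finset.ne_of_mem_erase hg)
      rw [hrest] at h0
      have hmu : ∑ g ∈ d.divisors.erase 1, ((ArithmeticFunction.moebius (d / g) : ℤ) : ℂ)
          = -((ArithmeticFunction.moebius d : ℤ) : ℂ) := by
        have hfull : ∑ g ∈ d.divisors, ((ArithmeticFunction.moebius (d / g) : ℤ) : ℂ) = 0 := by
          have := Nat.sum_div_divisors d (fun c => ((ArithmeticFunction.moebius c : ℤ) : ℂ))
          rw [this]
          have h2 := sum_moebius_divisors d (by omega)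
          have h3 := congrArg (fun x : ℤ => (x : ℂ)) h2
          push_cast at h3
          rw [h3, if_neg (by omega)]
        rw [← Finset.add_sum_erase _ _ h1mem, Nat.div_one] at hfull
        linear_combination hfull
      rw [hmu] at h0
      have : ∑ t ∈ (range d).filter (fun t => Nat.gcd t d = 1), ζ ^ t
          = ((ArithmeticFunction.moebius d : ℤ) : ℂ) := by linear_combination h0
      exact this


lemma pow_mod_eq {n : ℕ} {ω : ℂ} (hω : IsPrimitiveRoot ω n) (a : ℕ) :
    ω ^ a = ω ^ (a % n) := by
  conv_lhs => rw [← Nat.div_add_mod a n, pow_add, pow_mul, hω.pow_eq_one,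
    one_pow, one_mul]

lemma pow_eq_pow_iff {n : ℕ} (hn : 0 < n) {ω : ℂ} (hω : IsPrimitiveRoot ω n) (a b : ℕ) :
    ω ^ a = ω ^ b ↔ a % n = b % n := by
  constructor
  · intro h
    refine hω.pow_inj (Nat.mod_lt _ hn) (Nat.mod_lt _ hn) ?_
    rw [← pow_mod_eq hω, ← pow_mod_eq hω]
    exact h
  · intro h
    rw [pow_mod_eq hω a, pow_mod_eq hω b, h]

lemma prod_expand {n : ℕ} (hn : 1 ≤ n) {ω : ℂ} (hω : IsPrimitiveRoot ω n) (z : ℂ) (t : ℕ) :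
    ∏ i ∈ range n, (1 + z * (ω ^ t) ^ i)
      = (1 + z) * ∑ A ∈ (Finset.Icc 1 (n - 1)).powerset,
          z ^ A.card * (ω ^ t) ^ (∑ a ∈ A, a) := by
  have h0 : (0 : ℕ) ∈ range n := mem_range.mpr hn
  rw [← Finset.mul_prod_erase (range n) _ h0, pow_zero, mul_one]
  have herase : (range n).erase 0 = Finset.Icc 1 (n - 1) := by
    ext i
    simp only [Finset.mem_erase, Finset.mem_range, Finset.mem_Icc]
    omega
  rw [herase]
  congr 1
  calc ∏ i ∈ Finset.Icc 1 (n - 1), (1 + z * (ω ^ t) ^ i)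
      = ∏ i ∈ Finset.Icc 1 (n - 1), (z * (ω ^ t) ^ i + 1) := by
        exact prod_congr rfl fun i _ => add_comm _ _
    _ = ∑ A ∈ (Finset.Icc 1 (n - 1)).powerset,
          (∏ i ∈ A, z * (ω ^ t) ^ i) * ∏ i ∈ Finset.Icc 1 (n - 1) \ A, (1 : ℂ) := by
        rw [prod_add]
    _ = ∑ A ∈ (Finset.Icc 1 (n - 1)).powerset, z ^ A.card * (ω ^ t) ^ (∑ a ∈ A, a) := by
        refine sum_congr rfl fun A _ => ?_
        rw [prod_const_one, mul_one, prod_mul_distrib, prod_const,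
          prod_pow_eq_pow_sum]

lemma prod_closed_form {n : ℕ} (hn : 1 ≤ n) {ω : ℂ} (hω : IsPrimitiveRoot ω n) (z : ℂ)
    (t : ℕ) : ∏ i ∈ range n, (1 + z * (ω ^ t) ^ i)
      = (1 - (-z) ^ (n / Nat.gcd t n)) ^ (Nat.gcd t n) := by
  have hn0 : 0 < n := hn
  have hg : Nat.gcd t n ∣ n := Nat.gcd_dvd_right t n
  have hprim := isPrimitiveRoot_pow_gcd hn0 hω t
  have hm : 0 < n / Nat.gcd t n :=
    Nat.div_pos (Nat.le_of_dvd hn0 hg) (Nat.gcd_pos_of_pos_right t hn0)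
  have hper : ∀ i, (fun i => 1 + z * (ω ^ t) ^ i) (i + n / Nat.gcd t n)
      = (fun i => 1 + z * (ω ^ t) ^ i) i := by
    intro i
    simp only [pow_add, hprim.pow_eq_one, mul_one]
  have hmg : Nat.gcd t n * (n / Nat.gcd t n) = n := Nat.mul_div_cancel' hg
  calc ∏ i ∈ range n, (1 + z * (ω ^ t) ^ i)
      = ∏ i ∈ range (Nat.gcd t n * (n / Nat.gcd t n)), (1 + z * (ω ^ t) ^ i) := by rw [hmg]
    _ = (∏ i ∈ range (n / Nat.gcd t n), (1 + z * (ω ^ t) ^ i)) ^ (Nat.gcd t n) :=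
        prod_range_mul_periodic _ _ _ hper
    _ = (1 - (-z) ^ (n / Nat.gcd t n)) ^ (Nat.gcd t n) := by
        rw [prod_one_add_mul_root hm hprim z]

lemma key (n : ℕ) (hn : 1 ≤ n) (z : ℂ) :
    (∑ k ∈ Finset.range n, (SCard n k (1 % n) : ℂ) * z ^ k) * (1 + z) * (n : ℂ)
      = ∑ d ∈ n.divisors,
          ((ArithmeticFunction.moebius d : ℤ) : ℂ) * (1 - (-z) ^ d) ^ (n / d) := by
  have hn0 : 0 < n := hn
  have hnne : (n : ℕ) ≠ 0 := hn0.ne'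
  set ω : ℂ := Complex.exp (2 * Real.pi * Complex.I / n) with hωdef
  have hω : IsPrimitiveRoot ω n := Complex.isPrimitiveRoot_exp n hnne
  have hωne : ω ≠ 0 := hω.ne_zero hnne
  set P : Finset ℕ := Finset.Icc 1 (n - 1) with hP
  set T : ℂ := ∑ t ∈ range n, (ω⁻¹) ^ t * ∏ i ∈ range n, (1 + z * (ω ^ t) ^ i) with hT
  -- Part A : T = LHS
  have hTL : T = (1 + z) * ((n : ℂ) * ∑ k ∈ Finset.range n, (SCard n k (1 % n) : ℂ) * z ^ k) := by
    have step1 : T = ∑ t ∈ range n, ∑ A ∈ P.powerset,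
        (1 + z) * (z ^ A.card * (ω ^ (∑ a ∈ A, a) * ω⁻¹) ^ t) := by
      rw [hT]
      refine sum_congr rfl fun t _ => ?_
      rw [prod_expand hn hω z t, mul_sum, mul_sum]
      refine sum_congr rfl fun A _ => ?_
      rw [mul_pow, pow_right_comm]
      ring
    rw [step1, sum_comm]
    have step2 : ∀ A ∈ P.powerset,
        ∑ t ∈ range n, (1 + z) * (z ^ A.card * (ω ^ (∑ a ∈ A, a) * ω⁻¹) ^ t)
          = (1 + z) * (z ^ A.card *
              (if (∑ a ∈ A, a) % n = 1 % n then (n : ℂ) else 0)) := by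
      intro A _
      rw [← mul_sum, ← mul_sum]
      congr 1
      congr 1
      have hpow1 : (ω ^ (∑ a ∈ A, a) * ω⁻¹) ^ n = 1 := by
        rw [mul_pow, ← pow_mul, mul_comm (∑ a ∈ A, a) n, pow_mul, hω.pow_eq_one, one_pow,
          inv_pow, hω.pow_eq_one, inv_one, one_mul]
      rw [geom_sum_root hn0 hpow1]
      congr 1
      rw [eq_iff_iff]
      rw [mul_inv_eq_one₀ hωne]
      have h := pow_eq_pow_iff hn0 hω (∑ a ∈ A, a) 1
      rw [pow_one] at h
      exact h
    rw [sum_congr rfl step2, ← mul_sum]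
    congr 1
    have step3 : ∑ A ∈ P.powerset,
        z ^ A.card * (if (∑ a ∈ A, a) % n = 1 % n then (n : ℂ) else 0)
        = (n : ℂ) * ∑ A ∈ P.powerset.filter (fun A => (∑ a ∈ A, a) % n = 1 % n),
            z ^ A.card := by
      rw [mul_sum, sum_filter]
      refine sum_congr rfl fun A _ => ?_
      split_ifs with h
      · ring
      · ring
    rw [step3]
    congr 1
    have hmaps : ∀ A ∈ P.powerset.filter (fun A => (∑ a ∈ A, a) % n = 1 % n),
        A.card ∈ range n := by
      intro A hA
      have hsub : A ⊆ P := mem_powerset.mp (mem_filter.mp hA).1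
      have hc := card_le_card hsub
      rw [hP, Nat.card_Icc] at hc
      rw [mem_range]
      omega
    rw [← sum_fiberwise_of_maps_to hmaps (fun A => z ^ A.card)]
    refine sum_congr rfl fun k _ => ?_
    have hfe : (P.powerset.filter (fun A => (∑ a ∈ A, a) % n = 1 % n)).filter
        (fun A => A.card = k)
        = P.powerset.filter (fun A => A.card = k ∧ (∑ a ∈ A, a) % n = 1 % n) := by
      ext A
      simp only [mem_filter, mem_powerset]
      tauto
    rw [hfe]
    rw [sum_congr rfl (fun A hA => by rw [(mem_filter.mp hA).2.1] :
      ∀ A ∈ P.powerset.filter (fun A => A.card = k ∧ (∑ a ∈ A, a) % n = 1 % n),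
        z ^ A.card = z ^ k)]
    rw [sum_const, nsmul_eq_mul]
    norm_cast
  -- Part B : T = RHS
  have hTR : T = ∑ d ∈ n.divisors,
      ((ArithmeticFunction.moebius d : ℤ) : ℂ) * (1 - (-z) ^ d) ^ (n / d) := by
    have hτ : IsPrimitiveRoot ω⁻¹ n := hω.inv
    calc T = ∑ t ∈ range n, (ω⁻¹) ^ t * (1 - (-z) ^ (n / Nat.gcd t n)) ^ (Nat.gcd t n) := by
          rw [hT]
          exact sum_congr rfl fun t _ => by rw [prod_closed_form hn hω z t]
      _ = ∑ g ∈ n.divisors, ∑ t ∈ (range n).filter (fun t => Nat.gcd t n = g),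
            (ω⁻¹) ^ t * (1 - (-z) ^ (n / g)) ^ g := by
          rw [sum_range_eq_sum_gcd_fibers n hn0]
          refine sum_congr rfl fun g _ => sum_congr rfl fun t ht => ?_
          rw [(mem_filter.mp ht).2]
      _ = ∑ g ∈ n.divisors, (1 - (-z) ^ (n / g)) ^ g *
            ∑ s ∈ (range (n / g)).filter (fun s => Nat.gcd s (n / g) = 1),
              ((ω⁻¹) ^ g) ^ s := by
          refine sum_congr rfl fun g hg => ?_
          obtain ⟨hgd, -⟩ := Nat.mem_divisors.mp hg
          rw [mul_sum,
            sum_filter_gcd_eq n g hn0 hgd (fun t => (ω⁻¹) ^ t * (1 - (-z) ^ (n / g)) ^ g)]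
          refine sum_congr rfl fun s _ => ?_
          rw [pow_mul]
          ring
      _ = ∑ g ∈ n.divisors, (1 - (-z) ^ (n / g)) ^ g
            * ((ArithmeticFunction.moebius (n / g) : ℤ) : ℂ) := by
          refine sum_congr rfl fun g hg => ?_
          obtain ⟨hgd, -⟩ := Nat.mem_divisors.mp hg
          have hprim : IsPrimitiveRoot ((ω⁻¹) ^ g) (n / g) := by
            have h := isPrimitiveRoot_pow_gcd hn0 hτ g
            rwa [Nat.gcd_eq_left hgd] at h
          have hpos : 0 < n / g := Nat.div_pos (Nat.le_of_dvd hn0 hgd)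
            (Nat.pos_of_dvd_of_pos hgd hn0)
          rw [sum_primitiveRoots_moebius (n / g) hpos _ hprim]
      _ = ∑ g ∈ n.divisors, (fun d => ((ArithmeticFunction.moebius d : ℤ) : ℂ)
            * (1 - (-z) ^ d) ^ (n / d)) (n / g) := by
          refine sum_congr rfl fun g hg => ?_
          obtain ⟨hgd, -⟩ := Nat.mem_divisors.mp hg
          simp only
          rw [Nat.div_div_self hgd hnne]
          ring
      _ = _ := Nat.sum_div_divisors n
            (fun d => ((ArithmeticFunction.moebius d : ℤ) : ℂ) * (1 - (-z) ^ d) ^ (n / d))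
  calc (∑ k ∈ Finset.range n, (SCard n k (1 % n) : ℂ) * z ^ k) * (1 + z) * (n : ℂ)
      = (1 + z) * ((n : ℂ) * ∑ k ∈ Finset.range n, (SCard n k (1 % n) : ℂ) * z ^ k) := by ring
    _ = T := hTL.symm
    _ = _ := hTR


end S1Aux

open Polynomial in
/-- The generating polynomial identity
`(∑_k |S₁(n,k)| xᵏ) · (1+x) · n = ∑_{d ∣ n} μ(d) (1-(-x)^d)^{n/d}` in `ℤ[x]`. -/
theorem S1_generating_function (n : ℕ) (hn : 1 ≤ n) :
    (∑ k ∈ Finset.range n, C (SCard n k (1 % n) : ℤ) * X ^ k) * (1 + X) * (n : ℤ[X]) =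
      ∑ d ∈ n.divisors, C (ArithmeticFunction.moebius d) * (1 - (-X) ^ d) ^ (n / d) := by
  
  apply Polynomial.map_injective (Int.castRingHom ℂ) Int.cast_injective
  apply Polynomial.funext
  intro z
  have h := S1Aux.key n hn z
  simp only [Polynomial.map_mul, Polynomial.map_sum, Polynomial.map_pow, Polynomial.map_add,
    Polynomial.map_one, Polynomial.map_C, Polynomial.map_X, Polynomial.map_natCast,
    Polynomial.map_sub, Polynomial.map_neg, eval_mul, eval_finset_sum, eval_pow, eval_add,
    eval_one, eval_C, eval_X, eval_natCast, eval_sub, eval_neg, Polynomial.map_intCast, Polynomial.eval_intCast]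
  push_cast at h ⊢
  exact h
end

section
/- For integers n ≥ 1, 0 ≤ k ≤ n, and 0 ≤ r < n, the number of k-element subsets of {1,…,n} whose elements sum to r modulo n equals (1/n) · Σ_{d | gcd(n,k)} C(n/d, k/d) · c_d(r) · (−1)^{k/d + k}, where c_d(r) = Σ_{1≤j≤d, gcd(j,d)=1} ζ_d^{jr} is the Ramanujan sum with ζ_d a primitive d-th root of unity. -/
open Finset

section SbarHelpers
open Polynomial ArithmeticFunction

lemma geom_aux {x : ℂ} {N : ℕ} (h : x ^ N = 1) :
    ∑ i ∈ Finset.range N, x ^ i = if x = 1 then (N : ℂ) else 0 := by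
  split_ifs with h1
  · simp [h1]
  · rw [geom_sum_eq h1, h]; simp

lemma block_prod {M : Type*} [CommMonoid M] (g : ℂ → M) {w : ℂ} {d : ℕ} (m : ℕ)
    (h : w ^ d = 1) :
    ∏ a ∈ Finset.range (d * m), g (w ^ a) = (∏ a ∈ Finset.range d, g (w ^ a)) ^ m := by
  induction m with
  | zero => simp
  | succ m ih =>
    rw [Nat.mul_succ, Finset.prod_range_add, ih, pow_succ]
    congr 1
    apply Finset.prod_congr rfl
    intro i _
    congr 1
    rw [pow_add, pow_mul, h, one_pow, one_mul]

lemma prod_X_sub_C_primroot {w : ℂ} {d : ℕ} (hd : 0 < d) (hw : IsPrimitiveRoot w d) :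
    ∏ i ∈ Finset.range d, (X - C (w ^ i)) = X ^ d - 1 := by
  have hm : (X ^ d - C (1 : ℂ)).Monic := monic_X_pow_sub_C 1 hd.ne'
  have hcard : Multiset.card (X ^ d - C (1:ℂ)).roots = (X ^ d - C (1:ℂ)).natDegree := by
    rw [natDegree_X_pow_sub_C]
    exact hw.card_nthRoots_one
  have h2 := prod_multiset_X_sub_C_of_monic_of_roots_card_eq hm hcard
  have h3 : (X ^ d - C (1:ℂ)).roots = (Multiset.range d).map (fun i => w ^ i * 1) :=
    hw.nthRoots_eq (one_pow d)
  rw [h3, Multiset.map_map] at h2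
  rw [map_one] at h2
  rw [← h2, Finset.prod, Finset.range_val]
  simp [Function.comp]

lemma prod_X_add_C_primroot {w : ℂ} {d : ℕ} (hd : 0 < d) (hw : IsPrimitiveRoot w d) :
    ∏ i ∈ Finset.range d, (X + C (w ^ i)) = X ^ d - (-1 : ℂ[X]) ^ d := by
  have h := congrArg (fun p : ℂ[X] => p.comp (-X)) (prod_X_sub_C_primroot hd hw)
  simp only [Polynomial.prod_comp, sub_comp, X_comp, C_comp, pow_comp, one_comp, neg_comp] at h
  have hL : ∀ i ∈ Finset.range d, -X - C (w ^ i) = -1 * (X + C (w ^ i)) := by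
    intro i _; ring
  rw [Finset.prod_congr rfl hL, Finset.prod_mul_distrib, Finset.prod_const,
    Finset.card_range, neg_pow (X : ℂ[X])] at h
  have h2 := congrArg (fun p : ℂ[X] => (-1 : ℂ[X]) ^ d * p) h
  rw [← mul_assoc, ← mul_pow, neg_mul_neg, one_mul, one_pow, one_mul, mul_sub,
    ← mul_assoc, ← mul_pow, neg_mul_neg, one_mul, one_pow, one_mul, mul_one] at h2
  exact h2

lemma coeff_aux {d m k : ℕ} (hd : 0 < d) (hk : k ≤ d * m) :
    ((X ^ d - (-1 : ℂ[X]) ^ d) ^ m).coeff (d * m - k) =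
      if d ∣ k then (-1 : ℂ) ^ (k + k / d) * ((m.choose (k / d)) : ℂ) else 0 := by
  have hc : (X ^ d - (-1 : ℂ[X]) ^ d) = X ^ d + C ((-1 : ℂ) ^ (d + 1)) := by
    rw [pow_succ, C_mul, C_pow, C_neg, C_1]
    ring
  set c : ℂ := (-1) ^ (d + 1) with hcdef
  rw [hc, add_pow, finset_sum_coeff]
  have hterm : ∀ i ∈ Finset.range (m + 1),
      ((X ^ d) ^ i * C c ^ (m - i) * (m.choose i : ℂ[X])).coeff (d * m - k) =
      if d * i = d * m - k then c ^ (m - i) * (m.choose i : ℂ) else 0 := by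
    intro i _
    have h1 : ((X ^ d) ^ i * C c ^ (m - i) * (m.choose i : ℂ[X])) =
        C (c ^ (m - i) * (m.choose i : ℂ)) * X ^ (d * i) := by
      rw [← pow_mul, ← C_pow, C_mul, C_eq_natCast]
      ring
    rw [h1, coeff_C_mul, coeff_X_pow]
    by_cases h : d * m - k = d * i
    · rw [if_pos h, if_pos h.symm, mul_one]
    · rw [if_neg h, if_neg (Ne.symm h), mul_zero]
  rw [Finset.sum_congr rfl hterm]
  by_cases hdk : d ∣ k
  · obtain ⟨j, rfl⟩ := hdk
    have hj : j ≤ m := Nat.le_of_mul_le_mul_left hk hd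
    rw [if_pos ⟨j, rfl⟩]
    rw [Finset.sum_eq_single (m - j)]
    · have he : d * (m - j) = d * m - d * j := Nat.mul_sub ..
      rw [if_pos he, Nat.sub_sub_self hj, Nat.choose_symm hj,
        Nat.mul_div_cancel_left j hd]
      congr 1
      rw [hcdef, ← pow_mul]
      rw [show (d + 1) * j = d * j + j by ring]
    · intro i hi hne
      rw [if_neg]
      intro heq
      have : d * i = d * (m - j) := by rw [heq, Nat.mul_sub]
      exact hne (Nat.eq_of_mul_eq_mul_left hd this)
    · intro h
      exact absurd (Finset.mem_range.mpr (by omega)) h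
  · rw [if_neg hdk]
    apply Finset.sum_eq_zero
    intro i hi
    rw [if_neg]
    intro heq
    apply hdk
    have hi' : i ≤ m := by
      have := Finset.mem_range.mp hi; omega
    refine ⟨m - i, ?_⟩
    rw [Nat.mul_sub]
    omega

lemma esymm_eval {n k d : ℕ} (hn : 0 < n) (hk : k ≤ n) {w : ℂ}
    (hdn : d ∣ n) (hd : 0 < d) (hw : IsPrimitiveRoot w d) :
    ∑ A ∈ Finset.powersetCard k (Finset.Icc 1 n), ∏ a ∈ A, w ^ a =
      if d ∣ k then (-1 : ℂ) ^ (k + k / d) * (((n / d).choose (k / d)) : ℂ) else 0 := by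
  have hcard : (Finset.Icc 1 n).card = n := by simp
  have hnk : n - k ≤ (Finset.Icc 1 n).card := by omega
  have hv := Finset.prod_X_add_C_coeff (Finset.Icc 1 n) (fun a => w ^ a) hnk
  rw [hcard, Nat.sub_sub_self hk] at hv
  rw [← hv]
  -- replace Icc 1 n by range n
  have hw1 : w ^ n = 1 := by
    obtain ⟨m, rfl⟩ := hdn
    rw [pow_mul, hw.pow_eq_one, one_pow]
  have hicc : ∏ a ∈ Finset.Icc 1 n, (X + C (w ^ a)) =
      ∏ a ∈ Finset.range n, (X + C (w ^ a)) := by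
    rw [← Finset.Ico_insert_right (by omega : 1 ≤ n), Finset.range_eq_Ico,
      ← Finset.Ioo_insert_left hn, ← Finset.Ico_add_one_left_eq_Ioo, zero_add]
    rw [Finset.prod_insert (by simp), Finset.prod_insert (by simp)]
    rw [hw1, pow_zero]
  rw [hicc]
  obtain ⟨m, hm⟩ := hdn
  subst hm
  have hdvd : w ^ d = 1 := hw.pow_eq_one
  rw [block_prod (fun x => X + C x) m hdvd, prod_X_add_C_primroot hd hw,
    Nat.mul_div_cancel_left m hd]
  exact coeff_aux hd hk

lemma moebius_ind (x : ℕ) (hx : x ≠ 0) :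
    ∑ e ∈ x.divisors, (ArithmeticFunction.moebius e : ℂ) =
      if x = 1 then 1 else 0 := by
  have h := congrArg (fun f : ArithmeticFunction ℤ => f x)
    ArithmeticFunction.moebius_mul_coe_zeta
  simp only [ArithmeticFunction.coe_mul_zeta_apply, ArithmeticFunction.one_apply] at h
  have : ((∑ e ∈ x.divisors, ArithmeticFunction.moebius e : ℤ) : ℂ) =
      ((if x = 1 then 1 else 0 : ℤ) : ℂ) := by exact_mod_cast congrArg Int.cast h
  push_cast at this
  simpa using this

lemma divisors_gcd_eq (u d : ℕ) (hd : d ≠ 0) :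
    (Nat.gcd u d).divisors = d.divisors.filter (· ∣ u) := by
  ext e
  simp only [Nat.mem_divisors, Finset.mem_filter]
  constructor
  · rintro ⟨he, -⟩
    exact ⟨⟨he.trans (Nat.gcd_dvd_right u d), hd⟩, he.trans (Nat.gcd_dvd_left u d)⟩
  · rintro ⟨⟨hed, -⟩, heu⟩
    exact ⟨Nat.dvd_gcd heu hed, Nat.gcd_ne_zero_right hd⟩

lemma ramanujan_eval {d : ℕ} (hd : 0 < d) {η : ℂ} (hη : IsPrimitiveRoot η d) (r : ℕ) :
    ∑ u ∈ (Finset.range d).filter (fun u => Nat.gcd u d = 1), η ^ (-(r : ℤ) * u) =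
      ((∑ j ∈ (Int.gcd (r : ℤ) (d : ℕ)).divisors,
        (j : ℤ) * ArithmeticFunction.moebius (d / j) : ℤ) : ℂ) := by
  have hη0 : η ≠ 0 := hη.ne_zero hd.ne'
  -- step 1: unfold coprimality indicator via moebius
  rw [Finset.sum_filter]
  have step1 : ∀ u ∈ Finset.range d,
      (if Nat.gcd u d = 1 then η ^ (-(r : ℤ) * u) else 0) =
      ∑ e ∈ d.divisors, (if e ∣ u then (moebius e : ℂ) * η ^ (-(r : ℤ) * u) else 0) := by
    intro u _
    rw [← Finset.sum_filter, ← divisors_gcd_eq u d hd.ne', ← Finset.sum_mul,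
      moebius_ind _ (Nat.gcd_ne_zero_right hd.ne')]
    split_ifs <;> simp
  rw [Finset.sum_congr rfl step1, Finset.sum_comm]
  -- step 2: inner geometric sums
  have step2 : ∀ e ∈ d.divisors,
      (∑ u ∈ Finset.range d, if e ∣ u then (moebius e : ℂ) * η ^ (-(r : ℤ) * u) else 0) =
      (moebius e : ℂ) * (if ((d / e : ℕ) : ℤ) ∣ (-(r:ℤ)) then ((d / e : ℕ) : ℂ) else 0) := by
    intro e he
    obtain ⟨⟨f, hf⟩, -⟩ := Nat.mem_divisors.mp he
    have he0 : e ≠ 0 := by rintro rfl; simp at hf; omega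
    have hfe : d / e = f := by rw [hf, Nat.mul_div_cancel_left f (Nat.pos_of_ne_zero he0)]
    rw [← Finset.sum_filter]
    have hbij : ∑ u ∈ (Finset.range d).filter (e ∣ ·), (moebius e : ℂ) * η ^ (-(r : ℤ) * u) =
        ∑ v ∈ Finset.range f, (moebius e : ℂ) * η ^ (-(r : ℤ) * (e * v)) := by
      apply Finset.sum_nbij' (fun u => u / e) (fun v => e * v)
      · intro u hu
        simp only [Finset.mem_filter, Finset.mem_range] at hu
        obtain ⟨hu1, c, rfl⟩ := hu
        rw [Nat.mul_div_cancel_left c (Nat.pos_of_ne_zero he0)]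
        rw [Finset.mem_range]
        rw [hf] at hu1
        exact lt_of_mul_lt_mul_left hu1 (Nat.zero_le e)
      · intro v hv
        simp only [Finset.mem_range] at hv ⊢
        simp only [Finset.mem_filter, Finset.mem_range]
        exact ⟨by rw [hf]; exact Nat.mul_lt_mul_left (Nat.pos_of_ne_zero he0) |>.mpr hv,
          Dvd.intro v rfl⟩
      · intro u hu
        simp only [Finset.mem_filter] at hu
        obtain ⟨-, c, rfl⟩ := hu
        rw [Nat.mul_div_cancel_left c (Nat.pos_of_ne_zero he0)]
      · intro v hv
        rw [Nat.mul_div_cancel_left v (Nat.pos_of_ne_zero he0)]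
      · intro u hu
        simp only [Finset.mem_filter] at hu
        obtain ⟨-, c, rfl⟩ := hu
        rw [Nat.mul_div_cancel_left c (Nat.pos_of_ne_zero he0)]
        push_cast
        ring_nf
    rw [hbij, ← Finset.mul_sum, hfe]
    congr 1
    have hx : ∀ v : ℕ, η ^ (-(r : ℤ) * (e * v)) = (η ^ (-(r : ℤ) * e)) ^ v := by
      intro v
      rw [← zpow_natCast (η ^ (-(r : ℤ) * e)) v, ← zpow_mul]
      congr 1
      push_cast
      ring
    have hxf : (η ^ (-(r : ℤ) * e)) ^ f = 1 := by
      rw [← zpow_natCast (η ^ (-(r : ℤ) * e)) f, ← zpow_mul]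
      have : (-(r : ℤ) * e) * f = (-(r : ℤ)) * d := by
        rw [hf]; push_cast; ring
      rw [this, mul_comm, zpow_mul, zpow_natCast, hη.pow_eq_one, one_zpow]
    rw [Finset.sum_congr rfl (fun v _ => hx v), geom_aux hxf]
    have hiff : η ^ (-(r : ℤ) * e) = 1 ↔ ((f : ℕ) : ℤ) ∣ (-(r : ℤ)) := by
      rw [hη.zpow_eq_one_iff_dvd]
      constructor
      · intro hdvd
        have : ((f : ℤ) * e) ∣ (-(r:ℤ) * e) := by
          rw [show ((f:ℤ) * e) = (d : ℤ) by rw [hf]; push_cast; ring] at *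
          exact hdvd
        exact (mul_dvd_mul_iff_right (by exact_mod_cast he0 : (e:ℤ) ≠ 0)).mp this
      · intro hdvd
        rw [show (d : ℤ) = (f : ℤ) * e by rw [hf]; push_cast; ring]
        exact mul_dvd_mul hdvd dvd_rfl
    split_ifs with h1 h2 h2
    · rfl
    · exact absurd (hiff.mp h1) h2
    · exact absurd (hiff.mpr h2) h1
    · rfl
  rw [Finset.sum_congr rfl step2]
  -- step 3: reindex e ↦ d / e and identify with ramanujanSum
  have hg : Int.gcd (r : ℤ) ((d : ℕ) : ℤ) = Nat.gcd r d := by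
    rw [Int.gcd_natCast_natCast]
  rw [hg, divisors_gcd_eq r d hd.ne']
  have step3 : ∀ e ∈ d.divisors,
      (moebius e : ℂ) * (if ((d / e : ℕ) : ℤ) ∣ (-(r:ℤ)) then ((d / e : ℕ) : ℂ) else 0) =
      (fun (j : ℕ) => (if (j : ℤ) ∣ (-(r:ℤ)) then (j : ℂ) else 0) * (moebius (d / j) : ℂ)) (d / e) := by
    intro e he
    obtain ⟨hed, -⟩ := Nat.mem_divisors.mp he
    simp only
    rw [Nat.div_div_self hed hd.ne']
    ring
  rw [Finset.sum_congr rfl step3, Nat.sum_div_divisors d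
    (fun (j : ℕ) => (if (j : ℤ) ∣ (-(r:ℤ)) then (j : ℂ) else 0) * (moebius (d / j) : ℂ))]
  push_cast
  rw [Finset.sum_filter]
  apply Finset.sum_congr rfl
  intro j hj
  have : ((j : ℤ) ∣ (-(r:ℤ))) ↔ (j ∣ r) := by
    rw [dvd_neg, Int.natCast_dvd_natCast]
  split_ifs with h1 h2 h2
  · ring
  · exact absurd (this.mp h1) h2
  · exact absurd (this.mpr h2) h1
  · ring

lemma fiber_sum {n d : ℕ} (hn : 0 < n) (hdn : d ∣ n) (hd : 0 < d) {z : ℂ}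
    (hz : IsPrimitiveRoot z n) (r : ℕ) :
    ∑ s ∈ (Finset.range n).filter (fun s => n / Nat.gcd n s = d), z ^ (-(r : ℤ) * s) =
      ∑ u ∈ (Finset.range d).filter (fun u => Nat.gcd u d = 1),
        (z ^ (n / d)) ^ (-(r : ℤ) * u) := by
  set e := n / d with he
  have hne : n = e * d := by rw [he, Nat.div_mul_cancel hdn]
  have he0 : 0 < e := by
    rcases Nat.eq_zero_or_pos e with h | h
    · rw [h] at hne; omega
    · exact h
  have key : ∀ s, s < n → n / Nat.gcd n s = d → Nat.gcd n s = e ∧ e ∣ s := by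
    intro s hs1 hs2
    have hgdvd : Nat.gcd n s ∣ n := Nat.gcd_dvd_left n s
    have h1 : n = Nat.gcd n s * d := by
      rw [← hs2, Nat.mul_div_cancel' hgdvd]
    have hge : Nat.gcd n s = e := by
      have := h1.symm.trans hne
      exact Nat.eq_of_mul_eq_mul_right hd this
    exact ⟨hge, hge ▸ Nat.gcd_dvd_right n s⟩
  apply Finset.sum_nbij' (fun s => s / e) (fun u => e * u)
  · intro s hs
    simp only [Finset.mem_filter, Finset.mem_range] at hs ⊢
    obtain ⟨hs1, hs2⟩ := hs
    obtain ⟨hge, c, rfl⟩ := key s hs1 hs2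
    rw [Nat.mul_div_cancel_left c he0]
    constructor
    · rw [hne] at hs1
      exact lt_of_mul_lt_mul_left hs1 (Nat.zero_le e)
    · have : Nat.gcd (e * d) (e * c) = e * Nat.gcd d c := Nat.gcd_mul_left e d c
      rw [← hne] at this
      rw [hge] at this
      have h2 : Nat.gcd d c = 1 := by
        have h3 : e * 1 = e * Nat.gcd d c := by rw [mul_one]; exact this
        exact (Nat.eq_of_mul_eq_mul_left he0 h3).symm
      rw [Nat.gcd_comm]; exact h2
  · intro u hu
    simp only [Finset.mem_filter, Finset.mem_range] at hu ⊢
    obtain ⟨hu1, hu2⟩ := hu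
    constructor
    · rw [hne]; exact Nat.mul_lt_mul_left he0 |>.mpr hu1
    · have : Nat.gcd n (e * u) = e := by
        rw [hne, Nat.gcd_mul_left, Nat.gcd_comm, hu2, mul_one]
      rw [this, hne, Nat.mul_div_cancel_left d he0]
  · intro s hs
    simp only [Finset.mem_filter, Finset.mem_range] at hs
    obtain ⟨hs1, hs2⟩ := hs
    obtain ⟨-, c, rfl⟩ := key s hs1 hs2
    rw [Nat.mul_div_cancel_left c he0]
  · intro u hu
    rw [Nat.mul_div_cancel_left u he0]
  · intro s hs
    simp only [Finset.mem_filter, Finset.mem_range] at hs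
    obtain ⟨hs1, hs2⟩ := hs
    obtain ⟨-, c, rfl⟩ := key s hs1 hs2
    rw [Nat.mul_div_cancel_left c he0]
    rw [← zpow_natCast z e, ← zpow_mul]
    congr 1
    push_cast
    ring

end SbarHelpers

/-- `|S̄ᵣ(n,k)| = (1/n) ∑_{d ∣ gcd(n,k)} C(n/d,k/d) c_d(r) (-1)^{k/d+k}`. -/
theorem Sbar_count (n k r : ℕ) (hn : 1 ≤ n) (hk : k ≤ n) (hr : r < n) :
    (SbarCard n k r : ℤ) * n =
      ∑ d ∈ (Nat.gcd n k).divisors,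
        ((n / d).choose (k / d) : ℤ) * ramanujanSum d r * (-1) ^ (k / d + k) := by
  have hn0 : 0 < n := hn
  obtain ⟨z, hz⟩ : ∃ z : ℂ, IsPrimitiveRoot z n :=
    ⟨_, Complex.isPrimitiveRoot_exp n hn0.ne'⟩
  have hz0 : z ≠ 0 := hz.ne_zero hn0.ne'
  apply Int.cast_injective (α := ℂ)
  push_cast
  -- Step A: describe the set
  have hset : SbarCard n k r = ((Finset.powersetCard k (Finset.Icc 1 n)).filter
      (fun A => (∑ a ∈ A, a) % n = r)).card := by
    rw [SbarCard, Finset.powersetCard_eq_filter, Finset.filter_filter]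
  rw [hset]
  -- Step B
  rw [show ((((Finset.powersetCard k (Finset.Icc 1 n)).filter
      (fun A => (∑ a ∈ A, a) % n = r)).card : ℂ)) * (n : ℂ)
      = ∑ A ∈ Finset.powersetCard k (Finset.Icc 1 n),
          (if (∑ a ∈ A, a) % n = r then (n : ℂ) else 0) by
    rw [← Finset.sum_filter, Finset.sum_const, nsmul_eq_mul]]
  -- Step C
  have hC : ∀ A ∈ Finset.powersetCard k (Finset.Icc 1 n),
      (if (∑ a ∈ A, a) % n = r then (n : ℂ) else 0)
        = ∑ s ∈ Finset.range n, ((z ^ s) ^ (∑ a ∈ A, a)) * z ^ (-(r : ℤ) * s) := by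
    intro A _
    have hsum : ∀ s : ℕ, ((z ^ s) ^ (∑ a ∈ A, a)) * z ^ (-(r : ℤ) * s)
        = (z ^ (((∑ a ∈ A, a : ℕ) : ℤ) - (r : ℤ))) ^ s := by
      intro s
      rw [← pow_mul, ← zpow_natCast z (s * (∑ a ∈ A, a)), ← zpow_add₀ hz0,
        ← zpow_natCast (z ^ (((∑ a ∈ A, a : ℕ) : ℤ) - (r : ℤ))) s, ← zpow_mul]
      congr 1
      push_cast
      ring
    rw [Finset.sum_congr rfl (fun s _ => hsum s)]
    have hxn : (z ^ (((∑ a ∈ A, a : ℕ) : ℤ) - (r : ℤ))) ^ n = 1 := by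
      rw [← zpow_natCast (z ^ (((∑ a ∈ A, a : ℕ) : ℤ) - (r : ℤ))) n, ← zpow_mul,
        mul_comm, zpow_mul, zpow_natCast, hz.pow_eq_one, one_zpow]
    rw [geom_aux hxn]
    have hiff : z ^ (((∑ a ∈ A, a : ℕ) : ℤ) - (r : ℤ)) = 1 ↔ (∑ a ∈ A, a) % n = r := by
      rw [hz.zpow_eq_one_iff_dvd, ← Nat.modEq_iff_dvd]
      unfold Nat.ModEq
      rw [Nat.mod_eq_of_lt hr]
      exact eq_comm
    split_ifs with h1 h2 h2
    · rfl
    · exact absurd (hiff.mpr h1) h2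
    · exact absurd (hiff.mp h2) h1
    · rfl
  rw [Finset.sum_congr rfl hC, Finset.sum_comm]
  -- Step E
  have hE : ∀ s ∈ Finset.range n,
      (∑ A ∈ Finset.powersetCard k (Finset.Icc 1 n),
        ((z ^ s) ^ (∑ a ∈ A, a)) * z ^ (-(r : ℤ) * s))
      = (if (n / Nat.gcd n s) ∣ k then
          (-1 : ℂ) ^ (k + k / (n / Nat.gcd n s)) *
            (((n / (n / Nat.gcd n s)).choose (k / (n / Nat.gcd n s))) : ℂ) else 0)
          * z ^ (-(r : ℤ) * s) := by
    intro s _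
    rw [← Finset.sum_mul]
    congr 1
    have hg0 : 0 < Nat.gcd n s := Nat.gcd_pos_of_pos_left s hn0
    have hgn : Nat.gcd n s ∣ n := Nat.gcd_dvd_left n s
    have hds : (n / Nat.gcd n s) ∣ n := Nat.div_dvd_of_dvd hgn
    have hd0 : 0 < n / Nat.gcd n s := Nat.div_pos (Nat.le_of_dvd hn0 hgn) hg0
    have hprim : IsPrimitiveRoot (z ^ s) (n / Nat.gcd n s) := by
      have h1 : IsPrimitiveRoot (z ^ Nat.gcd n s) (n / Nat.gcd n s) :=
        hz.pow hn0 (Nat.mul_div_cancel' hgn).symm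
      have h2 : z ^ s = (z ^ Nat.gcd n s) ^ (s / Nat.gcd n s) := by
        rw [← pow_mul, Nat.mul_div_cancel' (Nat.gcd_dvd_right n s)]
      rw [h2]
      apply h1.pow_of_coprime
      have := Nat.coprime_div_gcd_div_gcd (m := s) (n := n) (by rwa [Nat.gcd_comm])
      rwa [Nat.gcd_comm s n] at this
    rw [← esymm_eval hn0 hk hds hd0 hprim]
    apply Finset.sum_congr rfl
    intro A _
    rw [← Finset.prod_pow_eq_pow_sum]
  rw [Finset.sum_congr rfl hE]
  -- Step F: group by d
  have hmaps : ∀ s ∈ Finset.range n, n / Nat.gcd n s ∈ n.divisors := by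
    intro s _
    rw [Nat.mem_divisors]
    exact ⟨Nat.div_dvd_of_dvd (Nat.gcd_dvd_left n s), hn0.ne'⟩
  rw [← Finset.sum_fiberwise_of_maps_to hmaps]
  have hfiber : ∀ d ∈ n.divisors,
      (∑ s ∈ (Finset.range n).filter (fun s => n / Nat.gcd n s = d),
        (if (n / Nat.gcd n s) ∣ k then
          (-1 : ℂ) ^ (k + k / (n / Nat.gcd n s)) *
            (((n / (n / Nat.gcd n s)).choose (k / (n / Nat.gcd n s))) : ℂ) else 0)
          * z ^ (-(r : ℤ) * s))
      = (if d ∣ k then (-1 : ℂ) ^ (k + k / d) * (((n / d).choose (k / d)) : ℂ) else 0)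
          * ((ramanujanSum d r : ℤ) : ℂ) := by
    intro d hd
    obtain ⟨hdn, -⟩ := Nat.mem_divisors.mp hd
    have hd0 : 0 < d := Nat.pos_of_mem_divisors hd
    have h1 : ∀ s ∈ (Finset.range n).filter (fun s => n / Nat.gcd n s = d),
        (if (n / Nat.gcd n s) ∣ k then
          (-1 : ℂ) ^ (k + k / (n / Nat.gcd n s)) *
            (((n / (n / Nat.gcd n s)).choose (k / (n / Nat.gcd n s))) : ℂ) else 0)
          * z ^ (-(r : ℤ) * s)
        = (if d ∣ k then (-1 : ℂ) ^ (k + k / d) * (((n / d).choose (k / d)) : ℂ) else 0)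
          * z ^ (-(r : ℤ) * s) := by
      intro s hs
      obtain ⟨-, h⟩ := Finset.mem_filter.mp hs
      rw [h]
    rw [Finset.sum_congr rfl h1, ← Finset.mul_sum]
    congr 1
    have hη : IsPrimitiveRoot (z ^ (n / d)) d := hz.pow hn0 (Nat.div_mul_cancel hdn).symm
    rw [fiber_sum hn0 hdn hd0 hz r, ramanujan_eval hd0 hη r]
    rfl
  rw [Finset.sum_congr rfl hfiber]
  -- final matching
  have hdiv : (Nat.gcd n k).divisors = n.divisors.filter (· ∣ k) := by
    rw [Nat.gcd_comm]
    exact divisors_gcd_eq k n hn0.ne'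
  rw [hdiv, Finset.sum_filter]
  apply Finset.sum_congr rfl
  intro d hd
  split_ifs with h
  · rw [show k / d + k = k + k / d from Nat.add_comm _ _]
    ring
  · rw [zero_mul]
end

section
/- If gcd(n,k,r) = 1, then for all 0 ≤ k ≤ n and 0 ≤ r < n, the number of k-element subsets of {1,…,n} summing to r mod n equals the number of k-element subsets of {1,…,n} summing to 1 mod n. -/
open Finset

/-- auxiliary count over `ZMod n`. -/
def Scard' (n : ℕ) [NeZero n] (k : ℕ) (r : ZMod n) : ℕ :=
  (Finset.univ.powerset.filter
    (fun A : Finset (ZMod n) => A.card = k ∧ ∑ a ∈ A, a = r)).card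

lemma Scard'_congr {n k : ℕ} [NeZero n] (f g : ZMod n → ZMod n)
    (hgf : ∀ x, g (f x) = x) (hfg : ∀ x, f (g x) = x) {r s : ZMod n}
    (h : ∀ A : Finset (ZMod n), A.card = k → ((∑ a ∈ A, a = r) ↔ (∑ a ∈ A, f a = s))) :
    Scard' n k r = Scard' n k s := by
  have hfinj : Function.Injective f := Function.LeftInverse.injective hgf
  have hginj : Function.Injective g := Function.LeftInverse.injective hfg
  unfold Scard'
  apply Finset.card_nbij' (i := fun A => A.image f) (j := fun B => B.image g)
  · intro A hA
    simp only [Finset.mem_coe, Finset.mem_filter, Finset.mem_powerset] at *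
    obtain ⟨-, hcard, hsum⟩ := hA
    refine ⟨Finset.subset_univ _, ?_, ?_⟩
    · rw [Finset.card_image_of_injective _ hfinj]; exact hcard
    · rw [Finset.sum_image (fun a _ b _ hab => hfinj hab)]
      exact (h A hcard).mp hsum
  · intro B hB
    simp only [Finset.mem_coe, Finset.mem_filter, Finset.mem_powerset] at *
    obtain ⟨-, hcard, hsum⟩ := hB
    have hcard' : (B.image g).card = k := by
      rw [Finset.card_image_of_injective _ hginj]; exact hcard
    refine ⟨Finset.subset_univ _, hcard', ?_⟩
    apply (h _ hcard').mpr
    rw [Finset.sum_image (fun a _ b _ hab => hginj hab)]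
    simpa [hfg] using hsum
  · intro A hA
    simp only [Finset.image_image]
    have : A.image (g ∘ f) = A.image id := Finset.image_congr (fun x _ => hgf x)
    simpa using this
  · intro B hB
    simp only [Finset.image_image]
    have : B.image (f ∘ g) = B.image id := Finset.image_congr (fun x _ => hfg x)
    simpa using this

lemma SbarCard_eq_Scard' (n : ℕ) [NeZero n] (k r : ℕ) (hr : r < n) :
    SbarCard n k r = Scard' n k (r : ZMod n) := by
  have hn : 0 < n := Nat.pos_of_ne_zero (NeZero.ne n)
  set g : ZMod n → ℕ := fun x => if x = 0 then n else x.val with hgdef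
  have hfg : ∀ x : ZMod n, ((g x : ℕ) : ZMod n) = x := by
    intro x
    by_cases hx : x = 0
    · simp [hgdef, hx]
    · simp [hgdef, hx, ZMod.natCast_val, ZMod.cast_id]
  have hginj : Function.Injective g := by
    intro x y hxy
    have := congrArg (fun m : ℕ => (m : ZMod n)) hxy
    simpa [hfg] using this
  have hgf : ∀ a ∈ Finset.Icc 1 n, g ((a : ZMod n)) = a := by
    intro a ha
    simp only [Finset.mem_Icc] at ha
    rcases eq_or_lt_of_le ha.2 with h | h
    · subst h; simp [hgdef]
    · have hval : ((a : ZMod n)).val = a := ZMod.val_cast_of_lt h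
      have : (a : ZMod n) ≠ 0 := by
        intro h0
        rw [h0] at hval
        simp [ZMod.val_zero] at hval
        omega
      simp [hgdef, this, hval]
  have hmemg : ∀ x : ZMod n, g x ∈ Finset.Icc 1 n := by
    intro x
    by_cases hx : x = 0
    · simp [hgdef, hx]; omega
    · have h1 : x.val ≠ 0 := by simpa [ZMod.val_eq_zero] using hx
      have h2 : x.val < n := ZMod.val_lt x
      simp [hgdef, hx]; omega
  unfold SbarCard Scard'
  apply Finset.card_nbij' (i := fun A => A.image (Nat.cast : ℕ → ZMod n))
    (j := fun B => B.image g)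
  · intro A hA
    simp only [Finset.mem_coe, Finset.mem_filter, Finset.mem_powerset] at *
    obtain ⟨hsub, hcard, hsum⟩ := hA
    have hinj : ∀ a ∈ A, ∀ b ∈ A, (a : ZMod n) = (b : ZMod n) → a = b := by
      intro a ha b hb hab
      have := congrArg g hab
      rwa [hgf a (hsub ha), hgf b (hsub hb)] at this
    refine ⟨Finset.subset_univ _, ?_, ?_⟩
    · rw [Finset.card_image_of_injOn hinj]; exact hcard
    · rw [Finset.sum_image hinj, ← Nat.cast_sum]
      rw [ZMod.natCast_eq_natCast_iff', Nat.mod_eq_of_lt hr]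
      exact hsum
  · intro B hB
    simp only [Finset.mem_coe, Finset.mem_filter, Finset.mem_powerset] at *
    obtain ⟨-, hcard, hsum⟩ := hB
    refine ⟨fun a ha => ?_, ?_, ?_⟩
    · obtain ⟨x, -, rfl⟩ := Finset.mem_image.mp ha
      exact hmemg x
    · rw [Finset.card_image_of_injective _ hginj]; exact hcard
    · have : ((∑ a ∈ B.image g, a : ℕ) : ZMod n) = (r : ZMod n) := by
        rw [Nat.cast_sum, Finset.sum_image (fun a _ b _ hab => hginj hab)]
        simpa [hfg] using hsum
      rw [ZMod.natCast_eq_natCast_iff', Nat.mod_eq_of_lt hr] at this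
      exact this
  · intro A hA
    simp only [Finset.mem_coe, Finset.mem_filter, Finset.mem_powerset] at hA
    simp only [Finset.image_image]
    have : A.image (g ∘ Nat.cast) = A.image id :=
      Finset.image_congr (fun x hx => hgf x (hA.1 hx))
    simpa using this
  · intro B hB
    simp only [Finset.image_image]
    have : B.image ((Nat.cast : ℕ → ZMod n) ∘ g) = B.image id :=
      Finset.image_congr (fun x _ => hfg x)
    simpa using this

lemma Scard'_shift {n k : ℕ} [NeZero n] (r c : ZMod n) :
    Scard' n k r = Scard' n k (r + (k : ZMod n) * c) := by
  apply Scard'_congr (f := fun x => x + c) (g := fun x => x - c)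
    (fun x => by ring) (fun x => by ring)
  intro A hA
  rw [Finset.sum_add_distrib, Finset.sum_const, hA, nsmul_eq_mul]
  exact (add_left_inj _).symm

lemma Scard'_unit_mul {n k : ℕ} [NeZero n] (u : (ZMod n)ˣ) (r : ZMod n) :
    Scard' n k r = Scard' n k ((u : ZMod n) * r) := by
  apply Scard'_congr (f := fun x => (u : ZMod n) * x)
    (g := fun x => ((u⁻¹ : (ZMod n)ˣ) : ZMod n) * x)
    (fun x => u.inv_mul_cancel_left x) (fun x => u.mul_inv_cancel_left x)
  intro A _
  rw [← Finset.mul_sum]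
  exact (Units.mul_right_inj u).symm

lemma exists_unit_aux (n k r : ℕ) [NeZero n] (h : Nat.gcd (Nat.gcd n k) r = 1) :
    ∃ (u : (ZMod n)ˣ) (c : ZMod n),
      (u : ZMod n) * (r : ZMod n) + (k : ZMod n) * c = 1 := by
  set g := Nat.gcd n k with hgdef
  have hg : g ∣ n := Nat.gcd_dvd_left n k
  have h1 : IsCoprime (g : ℤ) (r : ℤ) := by
    rw [Int.isCoprime_iff_gcd_eq_one]
    simpa [Int.gcd_natCast_natCast] using h
  obtain ⟨a, b, hab⟩ := h1
  have hbr : (b : ZMod g) * (r : ZMod g) = 1 := by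
    have := congrArg (Int.cast : ℤ → ZMod g) hab
    push_cast at this
    simpa [ZMod.natCast_self g] using this
  have hbu : IsUnit (b : ZMod g) := IsUnit.of_mul_eq_one _ hbr
  obtain ⟨u, hu⟩ := ZMod.unitsMap_surjective hg hbu.unit
  have hucast : ZMod.castHom hg (ZMod g) (u : ZMod n) = (b : ZMod g) := by
    have := congrArg (Units.val) hu
    simp only [ZMod.unitsMap_def, Units.coe_map, MonoidHom.coe_coe] at this
    rw [this, IsUnit.unit_spec]
  set x : ZMod n := 1 - (u : ZMod n) * (r : ZMod n) with hx
  have hxg : g ∣ x.val := by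
    rw [← ZMod.natCast_eq_zero_iff]
    have hv : ((x.val : ℕ) : ZMod g) = ZMod.castHom hg (ZMod g) x := by
      rw [ZMod.castHom_apply, ZMod.natCast_val]
    rw [hv, hx, map_sub, map_one, map_mul, hucast, map_natCast, hbr, sub_self]
  obtain ⟨m, hm⟩ := hxg
  refine ⟨u, (m : ZMod n) * ((Nat.gcdB n k : ℤ) : ZMod n), ?_⟩
  have hgn : (g : ZMod n) = (k : ZMod n) * ((Nat.gcdB n k : ℤ) : ZMod n) := by
    have := congrArg (Int.cast : ℤ → ZMod n) (Nat.gcd_eq_gcd_ab n k)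
    push_cast at this
    simpa [ZMod.natCast_self n] using this
  have hxval : ((x.val : ℕ) : ZMod n) = x := by
    rw [ZMod.natCast_val, ZMod.cast_id]
  have hkx : (k : ZMod n) * ((m : ZMod n) * ((Nat.gcdB n k : ℤ) : ZMod n)) = x := by
    rw [← hxval, hm]
    push_cast
    rw [hgn]
    ring
  rw [hkx, hx]
  ring

/-- If `gcd(n,k,r) = 1` then `|S̄ᵣ(n,k)| = |S̄₁(n,k)|`. -/
theorem Sbar_r_eq_Sbar_one (n k r : ℕ) (hk : k ≤ n) (hr : r < n)
    (h : Nat.gcd (Nat.gcd n k) r = 1) :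
    SbarCard n k r = SbarCard n k (1 % n) := by
  have hn : 0 < n := by omega
  have : NeZero n := ⟨by omega⟩
  obtain ⟨u, c, huc⟩ := exists_unit_aux n k r h
  have h1 : ((1 % n : ℕ) : ZMod n) = (1 : ZMod n) := by
    rw [ZMod.natCast_mod, Nat.cast_one]
  calc SbarCard n k r = Scard' n k (r : ZMod n) := SbarCard_eq_Scard' n k r hr
    _ = Scard' n k ((u : ZMod n) * (r : ZMod n)) := Scard'_unit_mul u _
    _ = Scard' n k ((u : ZMod n) * (r : ZMod n) + (k : ZMod n) * c) := Scard'_shift _ _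
    _ = Scard' n k ((1 % n : ℕ) : ZMod n) := by rw [huc, h1]
    _ = SbarCard n k (1 % n) := (SbarCard_eq_Scard' n k (1 % n) (Nat.mod_lt _ hn)).symm
end

section
/- If gcd(n,k,r) = 1 (with n ≥ 1), then there exist integers x, y, z with n·x + k·y + r·z = 1 and gcd(z,n) = 1. -/
/-- If `gcd(n,k,r) = 1` with `n ≥ 1`, then there are integers `x, y, z` with
`nx + ky + rz = 1` and `gcd(z,n) = 1`. -/
theorem bezout_with_coprime_coeff (n k r : ℤ) (hn : 1 ≤ n)
    (h : Int.gcd (Int.gcd n k) r = 1) :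
    ∃ x y z : ℤ, n * x + k * y + r * z = 1 ∧ Int.gcd z n = 1 := by
  set d : ℕ := Int.gcd n k with hd
  -- bezout for d and r
  have hcop : IsCoprime (d : ℤ) r := by
    rw [Int.isCoprime_iff_gcd_eq_one]
    simpa [Int.gcd] using h
  obtain ⟨a, b, hab⟩ := hcop
  -- (b : ZMod d) * (r : ZMod d) = 1
  have hbr : ((b : ZMod d) * (r : ZMod d)) = 1 := by
    have : ((a * d + b * r : ℤ) : ZMod d) = 1 := by rw [hab]; simp
    push_cast at this
    simpa using this
  have hnpos : n.natAbs ≠ 0 := by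
    have : 0 < n := hn
    omega
  haveI : NeZero n.natAbs := ⟨hnpos⟩
  have hdvd : d ∣ n.natAbs := Nat.gcd_dvd_left _ _
  -- the unit b in ZMod d
  have hub : IsUnit (b : ZMod d) := IsUnit.of_mul_eq_one _ hbr
  obtain ⟨w, hw⟩ := ZMod.unitsMap_surjective hdvd hub.unit
  -- define z
  set zn : ℕ := ((w : ZMod n.natAbs)).val with hzn
  set z : ℤ := (zn : ℤ) with hz
  have hzcop : Nat.Coprime zn n.natAbs := ZMod.val_coe_unit_coprime w
  have hgcd : Int.gcd z n = 1 := by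
    rw [Int.gcd]
    simpa [hz] using hzcop
  -- r * z ≡ r * b ≡ 1 mod d
  have hcast : ((z : ZMod d)) = (b : ZMod d) := by
    have h1 : ((zn : ZMod d)) = ZMod.castHom hdvd (ZMod d) (w : ZMod n.natAbs) := by
      rw [ZMod.castHom_apply, ← ZMod.natCast_val]
    have h2 : ZMod.castHom hdvd (ZMod d) (w : ZMod n.natAbs) = ((ZMod.unitsMap hdvd w : ZMod d)) := rfl
    rw [hz]
    push_cast
    rw [h1, h2, hw]
    exact hub.unit_spec
  have hdvd1 : (d : ℤ) ∣ 1 - r * z := by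
    rw [← ZMod.intCast_zmod_eq_zero_iff_dvd]
    push_cast
    rw [hcast, mul_comm]
    rw [hbr]
    ring
  obtain ⟨q, hq⟩ := hdvd1
  refine ⟨Int.gcdA n k * q, Int.gcdB n k * q, z, ?_, hgcd⟩
  have hbez : (d : ℤ) = n * Int.gcdA n k + k * Int.gcdB n k := Int.gcd_eq_gcd_ab n k
  have : n * (Int.gcdA n k * q) + k * (Int.gcdB n k * q) = (d : ℤ) * q := by
    rw [hbez]; ring
  rw [this, ← hq]
  ring
end

section
/- Let n ≥ 1, and suppose y and z are integers with gcd(z,n)=1 and n·x + k·y + r·z = 1 for some integer x. Then the map sending a subset A of ℤ/nℤ to {z·a + y : a ∈ A} is a bijection from the k-element subsets of ℤ/nℤ whose elements sum to r to the k-element subsets of ℤ/nℤ whose elements sum to 1. -/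
/-- If `gcd(z,n)=1` and `nx + ky + rz = 1`, then `A ↦ zA + y` is a bijection from
the `k`-element subsets of `ℤ/nℤ` summing to `r` to those summing to `1`. -/
theorem affine_map_bijOn (n k : ℕ) (hn : 0 < n) (x y z r : ℤ)
    (hz : Int.gcd z n = 1) (h : n * x + k * y + r * z = 1) :
    Set.BijOn (fun A : Finset (ZMod n) => A.image (fun a => (z : ZMod n) * a + (y : ZMod n)))
      {A : Finset (ZMod n) | A.card = k ∧ ∑ a ∈ A, a = (r : ZMod n)}
      {A : Finset (ZMod n) | A.card = k ∧ ∑ a ∈ A, a = 1} := by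
  have hzu : IsUnit (z : ZMod n) := by
    obtain ⟨a, b, hab⟩ := Int.isCoprime_iff_gcd_eq_one.mpr hz
    have h1 : (a : ZMod n) * z = 1 := by
      have := congrArg (Int.cast : ℤ → ZMod n) hab
      push_cast at this
      simpa [ZMod.natCast_self] using this
    exact IsUnit.of_mul_eq_one _ (by rw [mul_comm]; exact h1)
  obtain ⟨u, hu⟩ := hzu
  have hcast : (k : ZMod n) * y + r * z = 1 := by
    have := congrArg (Int.cast : ℤ → ZMod n) h
    push_cast at this
    simpa [ZMod.natCast_self] using this
  have hinj : Function.Injective (fun a : ZMod n => (z : ZMod n) * a + y) := by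
    intro a b hab
    simp only [add_left_inj] at hab
    rw [← hu] at hab
    exact (Units.mul_right_inj u).mp hab
  set g : ZMod n → ZMod n := fun b => ↑u⁻¹ * (b - y) with hg
  have hfg : ∀ b : ZMod n, (z : ZMod n) * g b + y = b := by
    intro b
    rw [hg, ← hu, ← mul_assoc, u.mul_inv]
    ring
  have hginj : Function.Injective g := by
    intro a b hab
    have := congrArg (fun t => (z : ZMod n) * t + y) hab
    simpa [hfg] using this
  constructor
  · -- MapsTo
    rintro A ⟨hcard, hsum⟩
    refine ⟨?_, ?_⟩
    · rw [Finset.card_image_of_injective _ hinj, hcard]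
    · rw [Finset.sum_image (fun a _ b _ h => hinj h), Finset.sum_add_distrib,
        ← Finset.mul_sum, hsum, Finset.sum_const, hcard, nsmul_eq_mul]
      linear_combination hcast
  constructor
  · -- InjOn
    intro A _ B _ hAB
    have := Finset.image_injective hinj hAB
    exact this
  · -- SurjOn
    rintro B ⟨hcard, hsum⟩
    refine ⟨B.image g, ⟨?_, ?_⟩, ?_⟩
    · rw [Finset.card_image_of_injective _ hginj, hcard]
    · rw [Finset.sum_image (fun a _ b _ h => hginj h)]
      have : ∑ b ∈ B, g b = ↑u⁻¹ * (1 - k * y) := by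
        simp only [hg]
        rw [← Finset.mul_sum, Finset.sum_sub_distrib, hsum, Finset.sum_const, hcard,
          nsmul_eq_mul]
      rw [this]
      have h2 : (1 : ZMod n) - k * y = r * z := by linear_combination -hcast
      rw [h2, ← hu, mul_comm (r : ZMod n), ← mul_assoc, u.inv_mul, one_mul]
    · simp only [Finset.image_image]
      have : (fun a : ZMod n => (z : ZMod n) * a + y) ∘ g = id := by
        funext b; simpa using hfg b
      rw [this, Finset.image_id]
end

section
/- For any n ≥ 1 and 0 ≤ r < n, (Σ_k |N_r(n,k)|) − (Σ_k |S̄_r(n,k)|) = (1/n) · Σ_{d | n, d even} 2^{n/d} · c_d(r); in particular this difference is 0 when n is odd. -/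
open Finset

namespace PfAux

open Finset ArithmeticFunction Polynomial



lemma ramanujanSum_eq_filter (d : ℕ) (hd : d ≠ 0) (r : ℕ) :
    ramanujanSum d r = ∑ j ∈ d.divisors.filter (fun j => j ∣ r),
      (j : ℤ) * moebius (d / j) := by
  unfold ramanujanSum
  apply Finset.sum_congr _ (fun x _ => rfl)
  ext j
  simp only [Nat.mem_divisors, Finset.mem_filter, Int.gcd_natCast_natCast,
    Nat.dvd_gcd_iff]
  constructor
  · rintro ⟨⟨h1, h2⟩, _⟩; exact ⟨⟨h2, hd⟩, h1⟩
  · rintro ⟨⟨h2, _⟩, h1⟩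
    refine ⟨⟨h1, h2⟩, ?_⟩
    simp [Nat.gcd_eq_zero_iff]
    intro _; exact hd

/-- the arithmetic function `i ↦ if i ∣ r then i else 0`. -/
def rdvd (r : ℕ) : ArithmeticFunction ℤ :=
  ⟨fun i => if i ∣ r then (i : ℤ) else 0, by simp⟩

lemma ramanujanSum_eq_mul (d : ℕ) (hd : d ≠ 0) (r : ℕ) :
    ramanujanSum d r = (rdvd r * moebius) d := by
  rw [ramanujanSum_eq_filter d hd r, ArithmeticFunction.mul_apply,
    Nat.sum_divisorsAntidiagonal (f := fun a b => (rdvd r) a * moebius b),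
    Finset.sum_filter]
  apply Finset.sum_congr rfl
  intro j hj
  simp only [rdvd, ArithmeticFunction.coe_mk]
  split <;> simp

lemma sum_ramanujanSum_divisors (j : ℕ) (hj : j ≠ 0) (r : ℕ) :
    ∑ d ∈ j.divisors, ramanujanSum d r = if j ∣ r then (j : ℤ) else 0 := by
  have : ∑ d ∈ j.divisors, ramanujanSum d r = ((rdvd r * moebius) * (zeta : ArithmeticFunction ℤ)) j := by
    rw [ArithmeticFunction.mul_apply,
      Nat.sum_divisorsAntidiagonal (f := fun a b => ((rdvd r * moebius)) a * (zeta : ArithmeticFunction ℤ) b)]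
    apply Finset.sum_congr rfl
    intro d hd
    rw [ramanujanSum_eq_mul d (Nat.pos_of_mem_divisors hd).ne' r]
    have : (j / d) ≠ 0 := by
      have := Nat.div_pos (Nat.le_of_dvd (Nat.pos_of_ne_zero hj) (Nat.dvd_of_mem_divisors hd)) (Nat.pos_of_mem_divisors hd)
      omega
    simp [ArithmeticFunction.natCoe_apply, ArithmeticFunction.zeta_apply, this]
  rw [this, mul_assoc, moebius_mul_coe_zeta, mul_one]
  rfl


variable {z : ℂ}

lemma orth {c : ℕ} (h : IsPrimitiveRoot z c) (m : ℕ) :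
    ∑ v ∈ range c, (z ^ m) ^ v = if c ∣ m then (c : ℂ) else 0 := by
  split_ifs with hdvd
  · rw [(h.pow_eq_one_iff_dvd m).2 hdvd]
    simp
  · have hne : z ^ m ≠ 1 := fun hh => hdvd ((h.pow_eq_one_iff_dvd m).1 hh)
    rw [geom_sum_eq hne, ← pow_mul, mul_comm, pow_mul, h.pow_eq_one, one_pow,
      sub_self, zero_div]

lemma prod_one_add {d : ℕ} (hd : 0 < d) (h : IsPrimitiveRoot z d) :
    ∏ i ∈ range d, (1 + z ^ i) = 1 - (-1 : ℂ) ^ d := by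
  have := X_pow_sub_C_eq_prod h hd (one_pow d)
  have heval := congrArg (Polynomial.eval (-1 : ℂ)) this
  simp only [eval_sub, eval_pow, eval_X, eval_C, eval_prod, mul_one] at heval
  have hstep : ∏ i ∈ range d, ((-1 : ℂ) - z ^ i) = ∏ i ∈ range d, (-1) * (1 + z ^ i) := by
    apply Finset.prod_congr rfl; intros; ring
  rw [hstep, Finset.prod_mul_distrib, Finset.prod_const, Finset.card_range] at heval
  have hu : ((-1:ℂ))^d * (-1:ℂ)^d = 1 := by rw [← pow_add, ← two_mul, pow_mul]; norm_num
  calc ∏ i ∈ range d, (1+z^i) = ((-1:ℂ)^d * (-1:ℂ)^d) * ∏ i ∈ range d, (1+z^i) := by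
        rw [hu, one_mul]
    _ = (-1:ℂ)^d * ((-1:ℂ)^d - 1) := by rw [mul_assoc, ← heval]
    _ = 1 - (-1:ℂ)^d := by rw [mul_sub, hu, mul_one]

lemma prod_periodic {d : ℕ} (h : IsPrimitiveRoot z d) (q : ℕ) :
    ∏ i ∈ range (d * q), (1 + z ^ (i + 1)) = (∏ i ∈ range d, (1 + z ^ (i + 1))) ^ q := by
  induction q with
  | zero => simp
  | succ q ih =>
    rw [Nat.mul_succ, Finset.prod_range_add, ih, pow_succ]
    congr 1
    apply Finset.prod_congr rfl
    intro i _
    have he : d*q+i+1 = i+1 + d*q := by omega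
    rw [he, pow_add, pow_mul, h.pow_eq_one, one_pow, mul_one]

lemma prod_shift {d : ℕ} (h : IsPrimitiveRoot z d) :
    ∏ i ∈ range d, (1 + z ^ (i + 1)) = ∏ i ∈ range d, (1 + z ^ i) := by
  have h1 : ∏ i ∈ range (d+1), (1 + z ^ i) = (∏ i ∈ range d, (1 + z ^ (i+1))) * (1 + z ^ 0) :=
    Finset.prod_range_succ' (fun i => 1 + z ^ i) d
  have h2 : ∏ i ∈ range (d+1), (1 + z ^ i) = (∏ i ∈ range d, (1 + z ^ i)) * (1 + z ^ d) :=
    Finset.prod_range_succ _ d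
  rw [h.pow_eq_one] at h2
  rw [pow_zero] at h1
  have key : (∏ i ∈ range d, (1 + z ^ (i+1))) * (1 + 1) = (∏ i ∈ range d, (1 + z ^ i)) * (1 + 1) := by
    rw [← h1, h2]
  have h2ne : (1 + 1 : ℂ) ≠ 0 := by norm_num
  exact mul_right_cancel₀ h2ne key


lemma moebius_sum (g : ℕ) (hg : g ≠ 0) :
    ∑ e ∈ g.divisors, (moebius e : ℤ) = if g = 1 then 1 else 0 := by
  have h := congrArg (fun f : ArithmeticFunction ℤ => f g) moebius_mul_coe_zeta
  simp only [ArithmeticFunction.mul_apply, ArithmeticFunction.one_apply] at h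
  rw [← h, Nat.sum_divisorsAntidiagonal (f := fun a b => (moebius a : ℤ) * (zeta : ArithmeticFunction ℤ) b)]
  apply Finset.sum_congr rfl
  intro d hd
  have hne : g / d ≠ 0 := by
    have h1 := Nat.pos_of_mem_divisors hd
    have h2 := Nat.le_of_dvd (Nat.pos_of_ne_zero hg) (Nat.dvd_of_mem_divisors hd)
    have := Nat.div_pos h2 h1
    omega
  simp [ArithmeticFunction.natCoe_apply, ArithmeticFunction.zeta_apply, hne]

lemma ram_char {d : ℕ} (hd : 0 < d) {ξ : ℂ} (h : IsPrimitiveRoot ξ d) (m : ℕ) :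
    ∑ u ∈ (range d).filter (fun u => Nat.gcd u d = 1), ξ ^ (u * m)
      = ∑ j ∈ d.divisors.filter (fun j => j ∣ m), (j : ℂ) * (moebius (d / j) : ℤ) := by
  rw [Finset.sum_filter]
  have step1 : ∀ u ∈ range d, (if Nat.gcd u d = 1 then ξ ^ (u*m) else 0)
      = ∑ e ∈ d.divisors.filter (fun e => e ∣ u), ((moebius e : ℤ) : ℂ) * ξ ^ (u*m) := by
    intro u _
    have hfil : d.divisors.filter (fun e => e ∣ u) = (Nat.gcd u d).divisors := by
      ext e
      simp only [Finset.mem_filter, Nat.mem_divisors, Nat.dvd_gcd_iff]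
      constructor
      · rintro ⟨⟨h1, h2⟩, h3⟩; exact ⟨⟨h3, h1⟩, by simp [Nat.gcd_eq_zero_iff]; intro _; exact hd.ne'⟩
      · rintro ⟨⟨h1, h2⟩, _⟩; exact ⟨⟨h2, hd.ne'⟩, h1⟩
    rw [hfil, ← Finset.sum_mul]
    have : ∑ e ∈ (Nat.gcd u d).divisors, ((moebius e : ℤ) : ℂ)
        = ((∑ e ∈ (Nat.gcd u d).divisors, (moebius e : ℤ) : ℤ) : ℂ) := by push_cast; ring
    rw [this, moebius_sum _ (by simp [Nat.gcd_eq_zero_iff]; intro _; exact hd.ne')]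
    split_ifs <;> simp
  rw [Finset.sum_congr rfl step1, Finset.sum_comm' (t' := d.divisors)
    (s' := fun e => (range d).filter (fun u => e ∣ u)) ?hcomm]
  case hcomm =>
    intro u e
    simp only [Finset.mem_filter]
    tauto
  -- now inner sum over u ∈ range d with e ∣ u
  have step2 : ∀ e ∈ d.divisors,
      ∑ u ∈ (range d).filter (fun u => e ∣ u), ((moebius e : ℤ) : ℂ) * ξ ^ (u*m)
      = ((moebius e : ℤ) : ℂ) * (if (d/e) ∣ m then ((d/e : ℕ) : ℂ) else 0) := by
    intro e he
    obtain ⟨hed, hd0⟩ := Nat.mem_divisors.mp he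
    have he0 : e ≠ 0 := by rintro rfl; exact hd0 (Nat.eq_zero_of_zero_dvd hed)
    rw [← Finset.mul_sum]
    congr 1
    have hbij : ∑ u ∈ (range d).filter (fun u => e ∣ u), ξ ^ (u*m)
        = ∑ v ∈ range (d/e), ξ ^ (e*v*m) := by
      apply Finset.sum_nbij' (i := fun u => u / e) (j := fun v => e * v)
      · intro u hu
        simp only [Finset.mem_filter, Finset.mem_range] at hu
        rw [Finset.mem_range]
        exact Nat.div_lt_div_of_lt_of_dvd hed hu.1
      · intro v hv
        simp only [Finset.mem_filter, Finset.mem_range] at hv ⊢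
        constructor
        · calc e * v < e * (d/e) := by
                exact (Nat.mul_lt_mul_left (Nat.pos_of_ne_zero he0)).mpr hv
            _ = d := Nat.mul_div_cancel' hed
        · exact Dvd.intro v rfl
      · intro u hu
        simp only [Finset.mem_filter] at hu
        exact Nat.mul_div_cancel' hu.2
      · intro v hv
        exact Nat.mul_div_cancel_left v (Nat.pos_of_ne_zero he0)
      · intro u hu
        simp only [Finset.mem_filter] at hu
        rw [Nat.mul_div_cancel' hu.2]
    rw [hbij]
    have hprim : IsPrimitiveRoot (ξ ^ e) (d / e) :=
      h.pow_of_dvd he0 hed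
    have : ∀ v, ξ ^ (e*v*m) = ((ξ^e)^m)^v := by
      intro v; rw [← pow_mul, ← pow_mul]; ring_nf
    rw [Finset.sum_congr rfl (fun v _ => this v)]
    -- orthogonality
    split_ifs with hdvd
    · rw [(hprim.pow_eq_one_iff_dvd m).2 hdvd]; simp
    · have hne : (ξ^e) ^ m ≠ 1 := fun hh => hdvd ((hprim.pow_eq_one_iff_dvd m).1 hh)
      rw [geom_sum_eq hne, ← pow_mul, mul_comm, pow_mul, hprim.pow_eq_one, one_pow,
        sub_self, zero_div]
  rw [Finset.sum_congr rfl step2]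
  -- reindex e ↦ d / e
  have stepr : ∀ x ∈ d.divisors, ((moebius x : ℤ) : ℂ) * (if (d/x) ∣ m then ((d/x : ℕ) : ℂ) else 0)
      = (fun j => (if j ∣ m then ((j:ℕ):ℂ) else 0) * ((moebius (d / j) : ℤ) : ℂ)) (d / x) := by
    intro x hx
    obtain ⟨hxd, hd0⟩ := Nat.mem_divisors.mp hx
    simp only
    rw [Nat.div_div_self hxd hd0]
    split_ifs <;> ring
  rw [Finset.sum_congr rfl stepr,
    Nat.sum_div_divisors d (fun j => (if j ∣ m then ((j:ℕ):ℂ) else 0) * ((moebius (d / j) : ℤ) : ℂ)),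
    Finset.sum_filter]
  apply Finset.sum_congr rfl
  intro a _
  split_ifs <;> simp









lemma subset_count (n r : ℕ) (hn : 0 < n) (hr : r < n) :
    ((((Icc 1 n).powerset.filter (fun A => (∑ a ∈ A, a) % n = r)).card : ℤ) * n)
      = ∑ d ∈ n.divisors.filter (fun d => ¬ Even d), 2 ^ (n / d) * ramanujanSum d r := by
  obtain ⟨z, hz⟩ : ∃ z : ℂ, IsPrimitiveRoot z n :=
    ⟨Complex.exp (2 * Real.pi * Complex.I / n), Complex.isPrimitiveRoot_exp n hn.ne'⟩
  set m := n - r with hm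
  -- Step 1: the double sum equals card * n
  have key1 : ∀ A ∈ (Icc 1 n).powerset,
      ∑ t ∈ range n, (z ^ ((∑ a ∈ A, a) + m)) ^ t
        = if (∑ a ∈ A, a) % n = r then (n : ℂ) else 0 := by
    intro A _
    rw [orth hz]
    congr 1
    have : n ∣ ((∑ a ∈ A, a) + m) ↔ (∑ a ∈ A, a) % n = r := by
      set s := ∑ a ∈ A, a with hs
      constructor
      · rintro ⟨c, hc⟩
        match c, hc with
        | 0, hc => omega
        | (c+1), hc =>
          rw [Nat.mul_succ] at hc
          have hsr : s = n * c + r := by omega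
          rw [hsr, Nat.mul_add_mod]
          exact Nat.mod_eq_of_lt hr
      · intro h
        refine ⟨s / n + 1, ?_⟩
        have h2 := Nat.div_add_mod s n
        rw [h] at h2
        rw [Nat.mul_succ]
        omega
    simp [this]
  have lhs1 : ∑ A ∈ (Icc 1 n).powerset, ∑ t ∈ range n, (z ^ ((∑ a ∈ A, a) + m)) ^ t
      = ((((Icc 1 n).powerset.filter (fun A => (∑ a ∈ A, a) % n = r)).card : ℂ) * n) := by
    rw [Finset.sum_congr rfl key1, ← Finset.sum_filter, Finset.sum_const, nsmul_eq_mul]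
  -- Step 2: swap and compute inner product over A
  have inner : ∀ t ∈ range n,
      ∑ A ∈ (Icc 1 n).powerset, (z ^ ((∑ a ∈ A, a) + m)) ^ t
        = (z ^ t) ^ m * ∏ i ∈ Icc 1 n, (1 + (z ^ t) ^ i) := by
    intro t _
    have e1 : ∀ A, (z ^ ((∑ a ∈ A, a) + m)) ^ t
        = (z ^ t) ^ m * ∏ i ∈ A, (z ^ t) ^ i := by
      intro A
      rw [Finset.prod_pow_eq_pow_sum]
      rw [← pow_mul, ← pow_mul, ← pow_mul, ← pow_add]
      ring_nf
    simp only [e1]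
    rw [← Finset.mul_sum]
    congr 1
    have := Finset.prod_add (fun i => (z^t)^i) (fun _ => (1:ℂ)) (Icc 1 n)
    simp only [Finset.prod_const_one, mul_one] at this
    rw [← this]
    apply Finset.prod_congr rfl
    intros; ring
  -- Step 3: evaluate the product
  have eval : ∀ t ∈ range n,
      ∏ i ∈ Icc 1 n, (1 + (z ^ t) ^ i)
        = if Odd (n / Nat.gcd n t) then (2:ℂ) ^ (Nat.gcd n t) else 0 := by
    intro t _
    set g := Nat.gcd n t with hg
    have hg0 : 0 < g := Nat.gcd_pos_of_pos_left t hn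
    set d := n / g with hd
    have hgdvd : g ∣ n := Nat.gcd_dvd_left n t
    have hnd : n = d * g := by rw [hd, Nat.div_mul_cancel hgdvd]
    have hd0 : 0 < d := Nat.div_pos (Nat.le_of_dvd hn hgdvd) hg0
    have hη : IsPrimitiveRoot (z ^ t) d := by
      rcases Nat.eq_zero_or_pos t with rfl | ht0
      · have : d = 1 := by
          rw [hd, hg, Nat.gcd_zero_right, Nat.div_self hn]
        rw [this, pow_zero]
        exact IsPrimitiveRoot.one
      have h1 : orderOf (z ^ t) = d := by
        rw [orderOf_pow' _ ht0.ne', ← hz.eq_orderOf]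
      exact h1 ▸ IsPrimitiveRoot.orderOf (z ^ t)
    have step : ∏ i ∈ Icc 1 n, (1 + (z ^ t) ^ i)
        = ∏ i ∈ range n, (1 + (z ^ t) ^ (i + 1)) := by
      apply Finset.prod_nbij' (i := fun i => i - 1) (j := fun i => i + 1)
      · intro a ha; simp only [Finset.mem_Icc] at ha; rw [Finset.mem_range]; omega
      · intro a ha; rw [Finset.mem_range] at ha; simp only [Finset.mem_Icc]; omega
      · intro a ha; simp only [Finset.mem_Icc] at ha; omega
      · intro a _; omega
      · intro a ha; simp only [Finset.mem_Icc] at ha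
        congr 2; omega
    rw [step, hnd, prod_periodic hη g, prod_shift hη, prod_one_add hd0 hη]
    by_cases hodd : Odd d
    · rw [if_pos hodd, hodd.neg_one_pow]; norm_num
    · rw [if_neg hodd]
      rw [Nat.not_odd_iff_even] at hodd
      rw [hodd.neg_one_pow, sub_self, zero_pow hg0.ne']
  -- Step 4: assemble, group by gcd
  have main : ∑ A ∈ (Icc 1 n).powerset, ∑ t ∈ range n, (z ^ ((∑ a ∈ A, a) + m)) ^ t
      = ∑ gg ∈ n.divisors, (if Odd (n / gg) then (2:ℂ)^gg
          * ((ramanujanSum (n / gg) r : ℤ) : ℂ) else 0) := by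
    rw [Finset.sum_comm, Finset.sum_congr rfl inner]
    have maps : ∀ t ∈ range n, Nat.gcd n t ∈ n.divisors := by
      intro t _
      exact Nat.mem_divisors.mpr ⟨Nat.gcd_dvd_left n t, hn.ne'⟩
    rw [← Finset.sum_fiberwise_of_maps_to maps]
    apply Finset.sum_congr rfl
    intro g hg
    obtain ⟨hgdvd, -⟩ := Nat.mem_divisors.mp hg
    have hg0 : 0 < g := Nat.pos_of_mem_divisors hg
    set d := n / g with hd
    have hnd : n = d * g := by rw [hd, Nat.div_mul_cancel hgdvd]
    have hnd' : n = g * d := by rw [hnd, Nat.mul_comm]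
    have hd0 : 0 < d := Nat.div_pos (Nat.le_of_dvd hn hgdvd) hg0
    have hfib : ∀ t ∈ (range n).filter (fun t => Nat.gcd n t = g),
        (z ^ t) ^ m * ∏ i ∈ Icc 1 n, (1 + (z ^ t) ^ i)
        = if Odd d then (2:ℂ)^g * (z ^ t) ^ m else 0 := by
      intro t ht
      obtain ⟨htr, htg⟩ := Finset.mem_filter.mp ht
      rw [eval t htr, htg]
      split_ifs <;> ring
    rw [Finset.sum_congr rfl hfib]
    by_cases hodd : Odd d
    · simp only [if_pos hodd]
      rw [← Finset.mul_sum]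
      congr 1
      -- ∑ over fiber of (z^t)^m = ramanujanSum d r
      have hprim : IsPrimitiveRoot (z ^ g) d := hz.pow hn (by rw [hnd]; ring)
      have hbij : ∑ t ∈ (range n).filter (fun t => Nat.gcd n t = g), (z ^ t) ^ m
          = ∑ u ∈ (range d).filter (fun u => Nat.gcd u d = 1), (z ^ g) ^ (u * m) := by
        apply Finset.sum_nbij' (i := fun t => t / g) (j := fun u => g * u)
        · intro t ht
          obtain ⟨htr, htg⟩ := Finset.mem_filter.mp ht
          rw [Finset.mem_range] at htr
          have hgt : g ∣ t := htg ▸ Nat.gcd_dvd_right n t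
          rw [Finset.mem_filter, Finset.mem_range]
          constructor
          · rw [hd]; exact Nat.div_lt_div_of_lt_of_dvd hgdvd htr
          · have h1 : Nat.gcd (g * d) (g * (t/g)) = g * Nat.gcd d (t/g) := Nat.gcd_mul_left g d (t/g)
            rw [Nat.mul_div_cancel' hgt, ← hnd', htg] at h1
            have : Nat.gcd d (t / g) = 1 :=
              (Nat.mul_eq_left hg0.ne').mp h1.symm
            rwa [Nat.gcd_comm] at this
        · intro u hu
          obtain ⟨hur, hug⟩ := Finset.mem_filter.mp hu
          rw [Finset.mem_range] at hur
          rw [Finset.mem_filter, Finset.mem_range]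
          constructor
          · calc g * u < g * d := by exact (Nat.mul_lt_mul_left hg0).mpr hur
              _ = n := by rw [hnd]; ring
          · have h1 : Nat.gcd (g * d) (g * u) = g * Nat.gcd d u := Nat.gcd_mul_left g d u
            rw [← hnd'] at h1
            rw [h1, Nat.gcd_comm d u, hug, mul_one]
        · intro t ht
          obtain ⟨-, htg⟩ := Finset.mem_filter.mp ht
          exact Nat.mul_div_cancel' (htg ▸ Nat.gcd_dvd_right n t)
        · intro u _
          exact Nat.mul_div_cancel_left u hg0
        · intro t ht
          obtain ⟨-, htg⟩ := Finset.mem_filter.mp ht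
          have hgt : g ∣ t := htg ▸ Nat.gcd_dvd_right n t
          rw [← pow_mul, ← pow_mul]
          congr 1
          rw [← mul_assoc, Nat.mul_div_cancel' hgt]
      rw [hbij, ram_char hd0 hprim m]
      -- now filter (· ∣ m) = filter (· ∣ r) and cast
      have hfil : d.divisors.filter (fun j => j ∣ m) = d.divisors.filter (fun j => j ∣ r) := by
        apply Finset.filter_congr
        intro j hj
        obtain ⟨hjd, -⟩ := Nat.mem_divisors.mp hj
        have hjn : j ∣ n := hjd.trans ⟨g, hnd⟩
        constructor
        · intro hjm
          have : j ∣ n - m := Nat.dvd_sub hjn hjm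
          rwa [hm, Nat.sub_sub_self hr.le] at this
        · intro hjr; exact Nat.dvd_sub hjn hjr
      rw [hfil, ramanujanSum_eq_filter d hd0.ne' r]
      push_cast
      ring
    · simp only [if_neg hodd, Finset.sum_const_zero]
  -- Step 5: reindex and descend to ℤ
  have final : ∑ gg ∈ n.divisors, (if Odd (n / gg) then (2:ℂ)^gg
          * ((ramanujanSum (n / gg) r : ℤ) : ℂ) else 0)
      = ((∑ d ∈ n.divisors.filter (fun d => ¬ Even d),
          2 ^ (n / d) * ramanujanSum d r : ℤ) : ℂ) := by
    have hstep : ∀ gg ∈ n.divisors, (if Odd (n / gg) then (2:ℂ)^gg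
          * ((ramanujanSum (n / gg) r : ℤ) : ℂ) else 0)
        = (fun dd => if Odd dd then (2:ℂ)^(n / dd) * ((ramanujanSum dd r : ℤ) : ℂ) else 0) (n / gg) := by
      intro gg hg
      obtain ⟨hgdvd, -⟩ := Nat.mem_divisors.mp hg
      simp only
      rw [Nat.div_div_self hgdvd hn.ne']
    rw [Finset.sum_congr rfl hstep, Nat.sum_div_divisors n
      (fun dd => if Odd dd then (2:ℂ)^(n / dd) * ((ramanujanSum dd r : ℤ) : ℂ) else 0)]
    rw [Finset.sum_filter]
    push_cast
    apply Finset.sum_congr rfl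
    intro d _
    simp only [Nat.not_even_iff_odd]
  have := lhs1.symm.trans (main.trans final)
  exact_mod_cast this
-- ### action infrastructure
instance rotAction (n : ℕ) : AddAction (ZMod n) (ZMod n → Bool) where
  vadd t w := fun i => w (i + t)
  zero_vadd w := funext fun i => by show w (i + 0) = w i; rw [add_zero]
  add_vadd a b w := funext fun i => by
    show w (i + (a + b)) = w ((i + a) + b)
    rw [add_assoc]

lemma vadd_apply {n : ℕ} (t : ZMod n) (w : ZMod n → Bool) (i : ZMod n) :
    (t +ᵥ w) i = w (i + t) := rfl

lemma coPeriod_eq_stab (n : ℕ) (w : ZMod n → Bool) :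
    coPeriod n w = Nat.card (AddAction.stabilizer (ZMod n) w) := by
  apply Nat.card_congr
  apply Equiv.subtypeEquivRight
  intro t
  rw [AddAction.mem_stabilizer_iff]  -- hope: t +ᵥ w = w
  rw [funext_iff]
  constructor
  · intro h i; rw [← h i]; rfl
  · intro h i; rw [← h i]; rfl

lemma rotSetoid_rel {n : ℕ} (u v : ZMod n → Bool) :
    (rotSetoid n).r u v ↔ ∃ t : ZMod n, t +ᵥ v = u := by
  show rotRel n u v ↔ _
  constructor
  · rintro ⟨t, h⟩; exact ⟨t, funext fun i => (h i).symm⟩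
  · rintro ⟨t, h⟩; exact ⟨t, fun i => by rw [← h]; rfl⟩

lemma coPeriod_vadd {n : ℕ} (t : ZMod n) (w : ZMod n → Bool) :
    coPeriod n (t +ᵥ w) = coPeriod n w := by
  unfold coPeriod
  apply Nat.card_congr
  apply Equiv.subtypeEquivRight
  intro s
  simp only [vadd_apply]
  constructor
  · intro h i
    have := h (i - t)
    rw [sub_add_eq_add_sub, sub_add_cancel, sub_add_cancel] at this
    exact this
  · intro h i
    rw [add_right_comm]
    exact h (i + t)

lemma onesCount_vadd {n : ℕ} (t : ZMod n) (w : ZMod n → Bool) :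
    onesCount n (t +ᵥ w) = onesCount n w := by
  unfold onesCount
  exact Nat.card_congr ((Equiv.addRight t).subtypeEquiv (fun i => by
    simp only [vadd_apply, Equiv.coe_addRight]))

lemma onesCount_le {n : ℕ} (hn : 0 < n) (w : ZMod n → Bool) : onesCount n w ≤ n := by
  haveI : NeZero n := ⟨hn.ne'⟩
  have h : Nat.card {i : ZMod n // w i = true} ≤ Nat.card (ZMod n) :=
    Nat.card_le_card_of_injective Subtype.val Subtype.val_injective
  rwa [Nat.card_zmod] at h

lemma coPeriod_pos {n : ℕ} (hn : 0 < n) (w : ZMod n → Bool) : 0 < coPeriod n w := by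
  haveI : NeZero n := ⟨hn.ne'⟩
  rw [coPeriod_eq_stab]
  exact Nat.card_pos

lemma coPeriod_dvd {n : ℕ} (hn : 0 < n) (w : ZMod n → Bool) : coPeriod n w ∣ n := by
  haveI : NeZero n := ⟨hn.ne'⟩
  rw [coPeriod_eq_stab]
  have := AddSubgroup.card_addSubgroup_dvd_card (AddAction.stabilizer (ZMod n) w)
  rwa [Nat.card_zmod] at this

-- fixed-point count
lemma card_fixed {n : ℕ} (hn : 0 < n) {m : ℕ} (hm : m ∣ n) (hm0 : m ≠ 0) :
    Nat.card {w : ZMod n → Bool // ∀ i, w (i + (m : ZMod n)) = w i} = 2 ^ m := by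
  haveI : NeZero n := ⟨hn.ne'⟩
  haveI : NeZero m := ⟨hm0⟩
  have invar : ∀ (w : ZMod n → Bool), (∀ i, w (i + (m : ZMod n)) = w i) →
      ∀ (k : ℕ) (i : ZMod n), w (i + (k * m : ℕ)) = w i := by
    intro w h k
    induction k with
    | zero => intro i; simp
    | succ k ih =>
      intro i
      have : ((k+1) * m : ℕ) = ((k * m : ℕ) : ZMod n) + (m : ZMod n) := by
        push_cast; ring
      rw [this, ← add_assoc, h, ih]
  let e : {w : ZMod n → Bool // ∀ i, w (i + (m : ZMod n)) = w i} ≃ (ZMod m → Bool) :=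
    { toFun := fun p => fun x => p.1 ((x.val : ℕ) : ZMod n)
      invFun := fun v => ⟨fun i => v (ZMod.castHom hm (ZMod m) i), by
        intro i
        show v (ZMod.castHom hm (ZMod m) (i + (m : ZMod n))) = v (ZMod.castHom hm (ZMod m) i)
        rw [map_add, map_natCast, ZMod.natCast_self, add_zero]⟩
      left_inv := by
        rintro ⟨w, h⟩
        ext j
        have hj : ((j.val : ℕ) : ZMod n) = j := ZMod.natCast_rightInverse j
        have hch : ZMod.castHom hm (ZMod m) j = ((j.val : ℕ) : ZMod m) := by
          conv_lhs => rw [← hj]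
          rw [map_natCast]
        have hval : (ZMod.castHom hm (ZMod m) j).val = j.val % m := by
          rw [hch, ZMod.val_natCast]
        show w (((ZMod.castHom hm (ZMod m) j).val : ℕ) : ZMod n) = w j
        rw [hval]
        have hdecomp : j.val % m + (j.val / m) * m = j.val := Nat.mod_add_div' j.val m
        calc w ((j.val % m : ℕ) : ZMod n)
            = w (((j.val % m : ℕ) : ZMod n) + ((j.val / m * m : ℕ) : ZMod n)) :=
              (invar w h (j.val / m) _).symm
          _ = w (((j.val % m + j.val / m * m : ℕ)) : ZMod n) := by rw [Nat.cast_add]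
          _ = w j := by rw [hdecomp, hj]
      right_inv := by
        intro v
        ext x
        show v (ZMod.castHom hm (ZMod m) ((x.val : ℕ) : ZMod n)) = v x
        rw [map_natCast, ZMod.natCast_rightInverse x] }
  rw [Nat.card_congr e]
  simp [Nat.card_eq_fintype_card, ZMod.card]

lemma dvd_coPeriod_iff {n : ℕ} (hn : 0 < n) {d : ℕ} (hd : d ∣ n) (hd0 : d ≠ 0) (w : ZMod n → Bool) :
    d ∣ coPeriod n w ↔ ∀ i, w (i + ((n / d : ℕ) : ZMod n)) = w i := by
  haveI : NeZero n := ⟨hn.ne'⟩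
  set m := n / d with hmdef
  have hmn : m ∣ n := Nat.div_dvd_of_dvd hd
  have hm0 : m ≠ 0 := (Nat.div_pos (Nat.le_of_dvd hn hd) (Nat.pos_of_ne_zero hd0)).ne'
  have horder : addOrderOf ((m : ℕ) : ZMod n) = d := by
    rw [ZMod.addOrderOf_coe m hn.ne', Nat.gcd_eq_right hmn, hmdef,
      Nat.div_div_self hd hn.ne']
  constructor
  · intro hdvd
    rw [coPeriod_eq_stab] at hdvd
    set H := AddAction.stabilizer (ZMod n) w with hH
    obtain ⟨x, hx⟩ := IsAddCyclic.exists_ofOrder_eq_natCard (α := H)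
    set j := Nat.card H with hj
    have hj0 : j ≠ 0 := Nat.card_pos.ne'
    have hd0' : d ∣ j := hdvd
    have hxord : addOrderOf (x : ZMod n) = j := by
      rw [AddSubgroup.addOrderOf_coe, hx]
    set y : ZMod n := (j / d) • (x : ZMod n) with hy
    have hjd0 : j / d ≠ 0 :=
      (Nat.div_pos (Nat.le_of_dvd (Nat.pos_of_ne_zero hj0) hd0') (Nat.pos_of_ne_zero hd0)).ne'
    have hyord : addOrderOf y = d := by
      rw [hy, addOrderOf_nsmul' _ hjd0, hxord, Nat.gcd_eq_right (Nat.div_dvd_of_dvd hd0'),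
        Nat.div_div_self hd0' hj0]
    have hyH : y ∈ H := AddSubgroup.nsmul_mem H x.2 (j / d)
    have hyv : ((y.val : ℕ) : ZMod n) = y := ZMod.natCast_rightInverse y
    have hgcd : Nat.gcd n y.val = m := by
      have h1 : n / Nat.gcd n y.val = d := by
        rw [← ZMod.addOrderOf_coe y.val hn.ne', hyv, hyord]
      have h2 : Nat.gcd n y.val ∣ n := Nat.gcd_dvd_left n y.val
      calc Nat.gcd n y.val = n / (n / Nat.gcd n y.val) := (Nat.div_div_self h2 hn.ne').symm
        _ = n / d := by rw [h1]
    -- Bezout: m = gcd n y.val ≡ gcdB * y.val mod n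
    have hbez := Nat.gcd_eq_gcd_ab n y.val
    have hcast : ((Nat.gcd n y.val : ℕ) : ZMod n) = (Nat.gcdB n y.val : ℤ) • y := by
      have := congrArg (fun z : ℤ => ((z : ℤ) : ZMod n)) hbez
      simp only [Int.cast_add, Int.cast_mul, Int.cast_natCast] at this
      rw [ZMod.natCast_self, zero_mul, zero_add] at this
      rw [this, zsmul_eq_mul, hyv]
      exact mul_comm _ _
    have hmem : ((m : ℕ) : ZMod n) ∈ H := by
      rw [← hgcd, hcast]
      exact AddSubgroup.zsmul_mem H hyH _
    intro i
    have h5 : ((m:ℕ):ZMod n) +ᵥ w = w := hmem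
    conv_rhs => rw [← h5]
    rfl
  · intro hfix
    have hτ : ((m : ℕ) : ZMod n) ∈ AddAction.stabilizer (ZMod n) w :=
      funext fun i => hfix i
    have hle : AddSubgroup.zmultiples ((m:ℕ):ZMod n) ≤ AddAction.stabilizer (ZMod n) w :=
      (AddSubgroup.zmultiples_le).mpr hτ
    have hcard : Nat.card (AddSubgroup.zmultiples ((m:ℕ):ZMod n)) = d := by
      rw [Nat.card_zmultiples, horder]
    rw [coPeriod_eq_stab, ← hcard]
    exact AddSubgroup.card_dvd_of_le hle

lemma quot_card (n : ℕ) (P : (ZMod n → Bool) → Prop) [DecidablePred P]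
    [DecidableEq (Quotient (rotSetoid n))] [NeZero n] :
    Nat.card (Quotient (Setoid.comap (Subtype.val : {w : ZMod n → Bool // P w} → _) (rotSetoid n)))
      = ((Finset.univ.filter P).image (Quotient.mk (rotSetoid n))).card := by
  classical
  rw [Nat.card_congr (Setoid.comapQuotientEquiv _ _)]
  have hset : Set.range (@Quotient.mk'' _ (rotSetoid n) ∘ (Subtype.val : {w : ZMod n → Bool // P w} → _))
      = ↑((Finset.univ.filter P).image (Quotient.mk (rotSetoid n))) := by
    ext c
    simp only [Set.mem_range, Function.comp_apply, Finset.coe_image, Set.mem_image,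
      Finset.mem_coe, Finset.mem_filter, Finset.mem_univ, true_and]
    constructor
    · rintro ⟨⟨w, hw⟩, rfl⟩
      exact ⟨w, hw, rfl⟩
    · rintro ⟨w, hw, rfl⟩
      exact ⟨⟨w, hw⟩, rfl⟩
  rw [hset, Nat.card_coe_set_eq, Set.ncard_coe_finset]

lemma rel_cop {n : ℕ} {u v : ZMod n → Bool}
    (h : Quotient.mk (rotSetoid n) u = Quotient.mk (rotSetoid n) v) :
    coPeriod n u = coPeriod n v := by
  have := Quotient.eq.mp h
  rw [rotSetoid_rel] at this
  obtain ⟨t, rfl⟩ := this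
  exact coPeriod_vadd t v

lemma rel_ones {n : ℕ} {u v : ZMod n → Bool}
    (h : Quotient.mk (rotSetoid n) u = Quotient.mk (rotSetoid n) v) :
    onesCount n u = onesCount n v := by
  have := Quotient.eq.mp h
  rw [rotSetoid_rel] at this
  obtain ⟨t, rfl⟩ := this
  exact onesCount_vadd t v



theorem neck_side (n r : ℕ) (hn : 0 < n) :
    (∑ k ∈ Finset.range (n+1), (NrCard n k r : ℤ)) * n
      = ∑ d ∈ n.divisors, 2 ^ (n / d) *
          (ramanujanSum d r) := by
  classical
  haveI : NeZero n := ⟨hn.ne'⟩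
  set q : (ZMod n → Bool) → Quotient (rotSetoid n) := Quotient.mk (rotSetoid n) with hq
  set T : Finset (ZMod n → Bool) := Finset.univ.filter (fun w => coPeriod n w ∣ r) with hT
  -- Step A
  have hbi : T.image q = (Finset.range (n+1)).biUnion
      (fun k => (Finset.univ.filter (fun w => onesCount n w = k ∧ coPeriod n w ∣ r)).image q) := by
    ext c
    simp only [Finset.mem_image, Finset.mem_biUnion, Finset.mem_range, Finset.mem_filter,
      Finset.mem_univ, true_and, hT]
    constructor
    · rintro ⟨w, hw, rfl⟩
      exact ⟨onesCount n w, Nat.lt_succ_of_le (onesCount_le hn w), w, ⟨rfl, hw⟩, rfl⟩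
    · rintro ⟨k, -, w, ⟨-, hw⟩, rfl⟩
      exact ⟨w, hw, rfl⟩
  have hdisj : ∀ k1 ∈ Finset.range (n+1), ∀ k2 ∈ Finset.range (n+1), k1 ≠ k2 →
      Disjoint ((Finset.univ.filter (fun w => onesCount n w = k1 ∧ coPeriod n w ∣ r)).image q)
        ((Finset.univ.filter (fun w => onesCount n w = k2 ∧ coPeriod n w ∣ r)).image q) := by
    intro k1 _ k2 _ hne
    rw [Finset.disjoint_left]
    rintro c hc1 hc2
    obtain ⟨w1, hw1, rfl⟩ := Finset.mem_image.mp hc1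
    obtain ⟨w2, hw2, heq⟩ := Finset.mem_image.mp hc2
    obtain ⟨h1, -⟩ := (Finset.mem_filter.mp hw1).2
    obtain ⟨h2, -⟩ := (Finset.mem_filter.mp hw2).2
    exact hne (h1 ▸ h2 ▸ (rel_ones heq.symm).symm ▸ rfl)
  have hksum : ∑ k ∈ Finset.range (n+1), NrCard n k r = (T.image q).card := by
    rw [hbi, Finset.card_biUnion hdisj]
    apply Finset.sum_congr rfl
    intro k _
    exact quot_card n _
  -- Step B
  have horbit : ∀ w₀ : ZMod n → Bool,
      (Finset.univ.filter (fun w => q w = q w₀)).card * coPeriod n w₀ = n := by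
    intro w₀
    have hsetorb : (↑(Finset.univ.filter (fun w => q w = q w₀)) : Set (ZMod n → Bool))
        = AddAction.orbit (ZMod n) w₀ := by
      ext w
      simp only [Finset.coe_filter, Finset.mem_univ, true_and, Set.mem_setOf_eq, hq]
      rw [Quotient.eq, rotSetoid_rel]
      exact (AddAction.mem_orbit_iff).symm
    have hcard1 : (Finset.univ.filter (fun w => q w = q w₀)).card
        = Nat.card (AddAction.orbit (ZMod n) w₀) := by
      rw [← hsetorb, Nat.card_coe_set_eq, Set.ncard_coe_finset]
    have hos := AddAction.card_orbit_mul_card_stabilizer_eq_card_addGroup (ZMod n) w₀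
    rw [hcard1, coPeriod_eq_stab, Nat.card_eq_fintype_card, Nat.card_eq_fintype_card, hos,
      ZMod.card]
  have hstepB : (T.image q).card * n = ∑ w ∈ T, coPeriod n w := by
    rw [← Finset.sum_fiberwise_of_maps_to (g := q) (t := T.image q)
      (fun w hw => Finset.mem_image_of_mem q hw) (fun w => coPeriod n w)]
    rw [Finset.card_eq_sum_ones (T.image q), Finset.sum_mul, one_mul]
    apply Finset.sum_congr rfl
    intro c hc
    obtain ⟨w₀, hw₀, rfl⟩ := Finset.mem_image.mp hc
    have hfib : T.filter (fun w => q w = q w₀) = Finset.univ.filter (fun w => q w = q w₀) := by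
      ext w
      simp only [Finset.mem_filter, Finset.mem_univ, true_and, hT]
      constructor
      · rintro ⟨-, h⟩; exact h
      · intro h
        refine ⟨?_, h⟩
        rw [rel_cop h]
        exact (Finset.mem_filter.mp hw₀).2
    have hconst : ∀ w ∈ T.filter (fun w => q w = q w₀), coPeriod n w = coPeriod n w₀ := by
      intro w hw
      exact rel_cop (Finset.mem_filter.mp hw).2
    rw [Finset.sum_congr rfl hconst, Finset.sum_const, smul_eq_mul, hfib]
    exact (horbit w₀).symm
  -- Step C
  have hC : ∑ w ∈ T, (coPeriod n w : ℤ)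
      = ∑ d ∈ n.divisors, 2 ^ (n / d) *
          (ramanujanSum d r) := by
    rw [hT, Finset.sum_filter]
    have step1 : ∀ w : ZMod n → Bool,
        (if coPeriod n w ∣ r then (coPeriod n w : ℤ) else 0)
          = ∑ d ∈ n.divisors, (if d ∣ coPeriod n w then
              (ramanujanSum d r) else 0) := by
      intro w
      have hcop0 : coPeriod n w ≠ 0 := (coPeriod_pos hn w).ne'
      have hfil : n.divisors.filter (fun d => d ∣ coPeriod n w) = (coPeriod n w).divisors := by
        ext d
        simp only [Finset.mem_filter, Nat.mem_divisors]
        constructor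
        · rintro ⟨-, h⟩; exact ⟨h, hcop0⟩
        · rintro ⟨h, -⟩; exact ⟨⟨h.trans (coPeriod_dvd hn w), hn.ne'⟩, h⟩
      rw [← Finset.sum_filter, hfil, sum_ramanujanSum_divisors _ hcop0]
    rw [Finset.sum_congr rfl (fun w _ => step1 w), Finset.sum_comm]
    apply Finset.sum_congr rfl
    intro d hd
    obtain ⟨hddvd, -⟩ := Nat.mem_divisors.mp hd
    have hd0 : d ≠ 0 := (Nat.pos_of_mem_divisors hd).ne'
    rw [← Finset.sum_filter]
    rw [Finset.sum_const]
    have hcount : (Finset.univ.filter (fun w : ZMod n → Bool => d ∣ coPeriod n w)).card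
        = 2 ^ (n / d) := by
      have hiff : ∀ w : ZMod n → Bool, d ∣ coPeriod n w ↔ ∀ i, w (i + ((n / d : ℕ) : ZMod n)) = w i :=
        fun w => dvd_coPeriod_iff hn hddvd hd0 w
      have : Finset.univ.filter (fun w : ZMod n → Bool => d ∣ coPeriod n w)
          = Finset.univ.filter (fun w : ZMod n → Bool => ∀ i, w (i + ((n / d : ℕ) : ZMod n)) = w i) := by
        apply Finset.filter_congr
        intro w _
        exact hiff w
      rw [this, ← Fintype.card_subtype, ← Nat.card_eq_fintype_card]
      exact card_fixed hn (Nat.div_dvd_of_dvd hddvd)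
        (Nat.div_pos (Nat.le_of_dvd hn hddvd) (Nat.pos_of_ne_zero hd0)).ne'
    rw [hcount, nsmul_eq_mul]
    push_cast
    ring
  -- combine
  calc (∑ k ∈ Finset.range (n+1), (NrCard n k r : ℤ)) * n
      = ((∑ k ∈ Finset.range (n+1), NrCard n k r : ℕ) : ℤ) * n := by push_cast; ring
    _ = (((T.image q).card * n : ℕ) : ℤ) := by rw [hksum]; push_cast; ring
    _ = ((∑ w ∈ T, coPeriod n w : ℕ) : ℤ) := by rw [hstepB]
    _ = ∑ w ∈ T, (coPeriod n w : ℤ) := by push_cast; rfl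
    _ = _ := hC

lemma sbar_sum (n r : ℕ) (hn : 0 < n) :
    ∑ k ∈ Finset.range (n+1), SbarCard n k r
      = ((Finset.Icc 1 n).powerset.filter (fun A => (∑ a ∈ A, a) % n = r)).card := by
  classical
  set S := (Finset.Icc 1 n).powerset.filter (fun A => (∑ a ∈ A, a) % n = r) with hS
  have hk : ∀ k, SbarCard n k r = (S.filter (fun A => A.card = k)).card := by
    intro k
    unfold SbarCard
    congr 1
    rw [hS, Finset.filter_filter]
    apply Finset.filter_congr
    intro A _
    exact and_comm
  rw [Finset.sum_congr rfl (fun k _ => hk k)]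
  symm
  apply Finset.card_eq_sum_card_fiberwise
  intro A hA
  rw [Finset.mem_coe, Finset.mem_range, Nat.lt_succ_iff]
  have h1 : A ⊆ Finset.Icc 1 n := Finset.mem_powerset.mp (Finset.mem_filter.mp hA).1
  calc A.card ≤ (Finset.Icc 1 n).card := Finset.card_le_card h1
    _ = n := by rw [Nat.card_Icc]; omega

end PfAux

/-- `(∑_k |Nᵣ(n,k)|) - (∑_k |S̄ᵣ(n,k)|) = (1/n) ∑_{d ∣ n, d even} 2^{n/d} c_d(r)`,
and in particular the difference vanishes when `n` is odd. -/
theorem Nr_total_sub_Sbar_total (n r : ℕ) (hn : 0 < n) (hr : r < n) :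
    ((∑ k ∈ Finset.range (n + 1), (NrCard n k r : ℤ)) -
        ∑ k ∈ Finset.range (n + 1), (SbarCard n k r : ℤ)) * n =
      (∑ d ∈ n.divisors.filter (fun d => Even d), 2 ^ (n / d) * ramanujanSum d r) ∧
    (Odd n → ∑ k ∈ Finset.range (n + 1), NrCard n k r =
      ∑ k ∈ Finset.range (n + 1), SbarCard n k r) := by
  have h1 := PfAux.neck_side n r hn
  have h2 : (∑ k ∈ Finset.range (n + 1), (SbarCard n k r : ℤ)) * n
      = ∑ d ∈ n.divisors.filter (fun d => ¬ Even d), 2 ^ (n / d) * ramanujanSum d r := by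
    have ha : (∑ k ∈ Finset.range (n + 1), (SbarCard n k r : ℤ))
        = ((((Finset.Icc 1 n).powerset.filter (fun A => (∑ a ∈ A, a) % n = r)).card : ℤ)) := by
      rw [← PfAux.sbar_sum n r hn]
      push_cast
      rfl
    rw [ha]
    exact PfAux.subset_count n r hn hr
  have hsplit := Finset.sum_filter_add_sum_filter_not n.divisors (fun d => Even d)
    (fun d => 2 ^ (n / d) * ramanujanSum d r)
  have hpart1 : ((∑ k ∈ Finset.range (n + 1), (NrCard n k r : ℤ)) -
        ∑ k ∈ Finset.range (n + 1), (SbarCard n k r : ℤ)) * n =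
      (∑ d ∈ n.divisors.filter (fun d => Even d), 2 ^ (n / d) * ramanujanSum d r) := by
    rw [sub_mul, h1, h2]
    linarith
  refine ⟨hpart1, ?_⟩
  intro hodd
  have hfe : n.divisors.filter (fun d => Even d) = ∅ := by
    rw [Finset.eq_empty_iff_forall_notMem]
    intro d hd
    obtain ⟨hmem, heven⟩ := Finset.mem_filter.mp hd
    obtain ⟨hdvd, -⟩ := Nat.mem_divisors.mp hmem
    obtain ⟨c, hc⟩ := hdvd
    rw [← Nat.not_even_iff_odd] at hodd
    exact hodd (hc ▸ heven.mul_right c)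
  rw [hfe, Finset.sum_empty] at hpart1
  have hzero : (∑ k ∈ Finset.range (n + 1), (NrCard n k r : ℤ)) -
      ∑ k ∈ Finset.range (n + 1), (SbarCard n k r : ℤ) = 0 := by
    rcases mul_eq_zero.mp hpart1 with h | h
    · exact h
    · exact absurd h (by exact_mod_cast hn.ne')
  have := sub_eq_zero.mp hzero
  exact_mod_cast this
end
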